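/- arXiv:math/0309075 — 3 statements merged into one kernel-verified Lean document; each statement's English description precedes it below -/
import Mathlib

section
/- For every integer m ≥ 2 and variables z_1, ..., z_m in a commutative ring, the sum over all trees T on the vertex set {1, ..., m} of the monomial z_1^{val_T(1)} · ... · z_m^{val_T(m)}, where val_T(i) denotes the degree (valence) of vertex i in T, equals z_1 ⋯ z_m (z_1 + ⋯ + z_m)^{m-2}. -/
open Classical

open SimpleGraph

section general
variable {V : Type*} {W : Type*}


lemma isTree_of_iso {G : SimpleGraph V} {H : SimpleGraph W} (e : G ≃g H) (h : G.IsTree) :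
    H.IsTree := by
  constructor
  · exact (Iso.connected_iff e).mp h.isConnected
  · intro v c hc
    exact h.IsAcyclic (c.map e.symm.toHom) (hc.map e.symm.injective)

lemma degree_eq_of_iso {G : SimpleGraph V} {H : SimpleGraph W} (e : G ≃g H) (v : V)
    [Fintype (G.neighborSet v)] [Fintype (H.neighborSet (e v))] :
    H.degree (e v) = G.degree v := by
  rw [← card_neighborSet_eq_degree, ← card_neighborSet_eq_degree]
  exact (Fintype.card_congr (e.mapNeighborSet v)).symm

lemma degree_pos_of_connected [Fintype V] {G : SimpleGraph V} (h : G.Connected)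
    (hV : 1 < Fintype.card V) (v : V) [Fintype (G.neighborSet v)] : 0 < G.degree v := by
  obtain ⟨w, hw⟩ := Fintype.exists_ne_of_one_lt_card hV v
  obtain ⟨p⟩ := h v w
  rw [degree_pos_iff_exists_adj]
  exact ⟨p.getVert 1, p.adj_snd (SimpleGraph.Walk.not_nil_of_ne (Ne.symm hw))⟩

lemma tree_sum_degree [Fintype V] {G : SimpleGraph V} (h : G.IsTree)
    [DecidableRel G.Adj] :
    ∑ v, G.degree v = 2 * (Fintype.card V - 1) := by
  have h1 := SimpleGraph.sum_degrees_eq_twice_card_edges G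
  have h2 := h.card_edgeFinset
  omega


lemma exists_walk_avoid {G : SimpleGraph V} [DecidableEq V] (hG : G.Connected) {l x : V}
    (hx : ∀ w, G.Adj l w → w = x) {a b : V} (ha : a ≠ l) (hb : b ≠ l) :
    ∃ p : G.Walk a b, l ∉ p.support := by
  obtain ⟨p0⟩ := hG a b
  set p : G.Path a b := p0.toPath with hp
  by_cases hl : l ∈ (p : G.Walk a b).support
  · exfalso
    have hspec := ((p : G.Walk a b).take_spec hl).symm
    set q := (p : G.Walk a b).takeUntil l hl with hq
    set r := (p : G.Walk a b).dropUntil l hl with hr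
    have hnodup : ((p : G.Walk a b).support).Nodup := p.2.2
    have hqnn : ¬ q.reverse.Nil := SimpleGraph.Walk.not_nil_of_ne (Ne.symm ha)
    obtain ⟨y, hadj, q', hq'⟩ := SimpleGraph.Walk.not_nil_iff.mp hqnn
    have hyx : y = x := hx y hadj
    have hxq : x ∈ q.support := by
      have : y ∈ q.reverse.support := by
        rw [hq']; simp [SimpleGraph.Walk.support_cons]
      rw [SimpleGraph.Walk.support_reverse] at this
      rw [← hyx]; exact List.mem_reverse.mp this
    have hrnn : ¬ r.Nil := SimpleGraph.Walk.not_nil_of_ne (Ne.symm hb)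
    obtain ⟨y2, hadj2, r', hr'⟩ := SimpleGraph.Walk.not_nil_iff.mp hrnn
    have hy2x : y2 = x := hx y2 hadj2
    have hxr : x ∈ r.support.tail := by
      rw [hr']; simp [SimpleGraph.Walk.support_cons, ← hy2x]
    rw [hspec, SimpleGraph.Walk.support_append] at hnodup
    exact (List.disjoint_of_nodup_append hnodup) hxq hxr
  · exact ⟨p, hl⟩

lemma walk_comap {H : SimpleGraph W} {f : V → W} (hf : Function.Injective f) :
    ∀ {u v : W} (p : H.Walk u v), (∀ x ∈ p.support, x ∈ Set.range f) →
    ∀ (a b : V), f a = u → f b = v →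
    ∃ q : (H.comap f).Walk a b, q.support.map f = p.support ∧
      q.edges.map (Sym2.map f) = p.edges := by
  intro u v p
  induction p with
  | nil =>
    intro _ a b hab hb
    obtain rfl : a = b := hf (hab.trans hb.symm)
    exact ⟨.nil, by simp [hab], by simp⟩
  | @cons u w v h q ih =>
    intro hs a b ha hb
    obtain ⟨c, hc⟩ : w ∈ Set.range f := hs w (by simp)
    obtain ⟨q', hq1, hq2⟩ := ih (fun x hx => hs x (by simp [hx])) c b hc hb
    refine ⟨.cons (by rw [SimpleGraph.comap_adj, ha, hc]; exact h) q', ?_, ?_⟩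
    · simp [hq1, ha]
    · simp [hq2, ha, hc]

lemma cycle_comap {H : SimpleGraph W} {f : V → W} (hf : Function.Injective f) {a : V}
    (c : H.Walk (f a) (f a)) (hc : c.IsCycle) (hs : ∀ x ∈ c.support, x ∈ Set.range f) :
    ∃ q : (H.comap f).Walk a a, q.IsCycle := by
  obtain ⟨q, hq1, hq2⟩ := walk_comap hf c hs a a rfl rfl
  refine ⟨q, ⟨⟨?_, ?_⟩, ?_⟩⟩
  · exact ⟨List.Nodup.of_map _ (hq2 ▸ hc.edges_nodup)⟩
  · intro hq
    have : c.edges = [] := by rw [← hq2, hq]; simp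
    have hlen : c.length = 0 := by
      have := congrArg List.length this
      simpa [SimpleGraph.Walk.length_edges] using this
    exact hc.ne_nil (SimpleGraph.Walk.nil_iff_length_eq.mpr hlen).eq_nil
  · have : q.support.tail.map f = c.support.tail := by rw [← hq1, List.map_tail]
    exact List.Nodup.of_map _ (this ▸ hc.2)

end general


variable {m : ℕ}

lemma castSuccEmb_apply (a : Fin m) : (Fin.castSuccEmb : Fin m ↪ Fin (m+1)) a = a.castSucc := rfl

lemma castSucc_ne_last' : ∀ a : Fin m, a.castSucc ≠ Fin.last m := fun a => (Fin.castSucc_lt_last a).ne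

/-- Attach the new vertex `last` as a leaf to vertex `j`. -/
def attachS (T : SimpleGraph (Fin m)) (j : Fin m) : SimpleGraph (Fin (m + 1)) :=
  (T.map Fin.castSuccEmb) ⊔ (SimpleGraph.edge (Fin.castSucc j) (Fin.last m))

lemma attachS_adj_cast {T : SimpleGraph (Fin m)} {j a b : Fin m} :
    (attachS T j).Adj a.castSucc b.castSucc ↔ T.Adj a b := by
  simp only [attachS, sup_adj, SimpleGraph.map_adj, SimpleGraph.edge_adj]
  constructor
  · rintro (⟨a', b', h, ha, hb⟩ | ⟨(⟨h1, h2⟩ | ⟨h1, h2⟩), _⟩)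
    · simp only [Fin.coe_castSuccEmb] at ha hb
      rwa [← Fin.castSucc_injective _ ha, ← Fin.castSucc_injective _ hb]
    · exact absurd h2 ((Fin.castSucc_lt_last b).ne)
    · exact absurd h1 ((Fin.castSucc_lt_last a).ne)
  · intro h; exact Or.inl ⟨a, b, h, rfl, rfl⟩

lemma attachS_adj_last {T : SimpleGraph (Fin m)} {j : Fin m} {w : Fin (m + 1)} :
    (attachS T j).Adj (Fin.last m) w ↔ w = j.castSucc := by
  simp only [attachS, sup_adj, SimpleGraph.map_adj, SimpleGraph.edge_adj]
  constructor
  · rintro (⟨a', b', _, ha, _⟩ | ⟨(⟨h1, h2⟩ | ⟨_, h2⟩), _⟩)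
    · exact absurd ha ((Fin.castSucc_lt_last a').ne)
    · exact absurd h1.symm (Fin.castSucc_lt_last j).ne
    · exact h2
  · rintro rfl
    exact Or.inr ⟨by tauto, (Fin.castSucc_lt_last j).ne'⟩

lemma attachS_comap {T : SimpleGraph (Fin m)} {j : Fin m} :
    (attachS T j).comap Fin.castSucc = T := by
  ext a b
  rw [comap_adj, attachS_adj_cast]

lemma attachS_adj_last' {T : SimpleGraph (Fin m)} {j : Fin m} {w : Fin (m + 1)} :
    (attachS T j).Adj w (Fin.last m) ↔ w = j.castSucc := by
  rw [adj_comm, attachS_adj_last]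

lemma attachS_isTree {T : SimpleGraph (Fin m)} {j : Fin m} (hT : T.IsTree) :
    (attachS T j).IsTree := by
  have hreach : ∀ a b : Fin m, (attachS T j).Reachable a.castSucc b.castSucc :=
    fun a b => (hT.isConnected a b).map ⟨Fin.castSucc, fun {a b} h => attachS_adj_cast.mpr h⟩
  have hlast : ∀ b : Fin m, (attachS T j).Reachable (Fin.last m) b.castSucc :=
    fun b => ((attachS_adj_last.mpr rfl).reachable).trans (hreach j b)
  constructor
  · constructor
    intro u v
    refine Fin.lastCases ?_ (fun a => ?_) u
    · refine Fin.lastCases ?_ (fun b => ?_) v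
      · exact Reachable.refl _
      · exact hlast b
    · refine Fin.lastCases ?_ (fun b => ?_) v
      · exact (hlast a).symm
      · exact hreach a b
  · intro v c hc
    by_cases hl : Fin.last m ∈ c.support
    · set c' := c.rotate _ hl with hc'def
      have hc' : c'.IsCycle := hc.rotate hl
      have hnn : ¬ c'.Nil := fun h => hc'.ne_nil h.eq_nil
      obtain ⟨y, hadj, p, hp⟩ := SimpleGraph.Walk.not_nil_iff.mp hnn
      have hy : y = j.castSucc := attachS_adj_last.mp hadj
      subst hy
      have hpnn : ¬ p.reverse.Nil :=
        SimpleGraph.Walk.not_nil_of_ne (Fin.castSucc_lt_last j).ne'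
      obtain ⟨y2, hadj2, p2, hp2⟩ := SimpleGraph.Walk.not_nil_iff.mp hpnn
      have hy2 : y2 = j.castSucc := attachS_adj_last.mp hadj2
      subst hy2
      have hmem : s(Fin.last m, j.castSucc) ∈ p.edges := by
        have : s(Fin.last m, j.castSucc) ∈ p.reverse.edges := by
          rw [hp2]; simp
        rwa [SimpleGraph.Walk.edges_reverse, List.mem_reverse] at this
      have htrail := hc'.edges_nodup
      rw [hp, SimpleGraph.Walk.edges_cons] at htrail
      exact (List.nodup_cons.mp htrail).1 hmem
    · have hv : v ≠ Fin.last m := fun h => hl (h ▸ c.start_mem_support)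
      obtain ⟨a, ha⟩ := Fin.eq_castSucc_of_ne_last hv
      subst ha
      have hs : ∀ x ∈ c.support, x ∈ Set.range (Fin.castSucc : Fin m → Fin (m+1)) := by
        intro x hxs
        obtain ⟨y, hy⟩ := Fin.eq_castSucc_of_ne_last (fun h => hl (h ▸ hxs))
        exact ⟨y, hy⟩
      obtain ⟨q, hq⟩ := cycle_comap (Fin.castSucc_injective m) c hc hs
      have hle : (attachS T j).comap Fin.castSucc ≤ T := le_of_eq attachS_comap
      exact hT.IsAcyclic (q.map (Hom.ofLE hle))
        (hq.map (f := Hom.ofLE hle) Function.injective_id)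

lemma attachS_degree_last {T : SimpleGraph (Fin m)} {j : Fin m} :
    (attachS T j).degree (Fin.last m) = 1 := by
  have h : (attachS T j).neighborFinset (Fin.last m) = {j.castSucc} := by
    ext w; simp [mem_neighborFinset, attachS_adj_last]
  rw [SimpleGraph.degree, h, Finset.card_singleton]

lemma attachS_degree_cast {T : SimpleGraph (Fin m)} {j i : Fin m} :
    (attachS T j).degree i.castSucc = T.degree i + (if i = j then 1 else 0) := by
  have h : (attachS T j).neighborFinset i.castSucc
      = (T.neighborFinset i).map Fin.castSuccEmb ∪ (if i = j then {Fin.last m} else ∅) := by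
    ext w
    simp only [mem_neighborFinset, Finset.mem_union, Finset.mem_map, castSuccEmb_apply]
    refine Fin.lastCases ?_ (fun b => ?_) w
    · rw [attachS_adj_last']
      constructor
      · intro h
        right
        simp [Fin.castSucc_inj.mp h]
      · rintro (⟨a, _, ha⟩ | h2)
        · exact absurd ha (castSucc_ne_last' a)
        · split_ifs at h2 with hij
          · rw [hij]
          · simp at h2
    · rw [attachS_adj_cast]
      constructor
      · intro h
        exact Or.inl ⟨b, h, rfl⟩
      · rintro (⟨a, ha, hab⟩ | h2)
        · rwa [← Fin.castSucc_inj.mp hab]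
        · split_ifs at h2 with hij
          · exact absurd (Finset.mem_singleton.mp h2) (castSucc_ne_last' b)
          · simp at h2
  have hdisj : Disjoint ((T.neighborFinset i).map Fin.castSuccEmb)
      (if i = j then ({Fin.last m} : Finset (Fin (m+1))) else ∅) := by
    split_ifs
    · rw [Finset.disjoint_singleton_right, Finset.mem_map]
      rintro ⟨a, _, ha⟩
      exact castSucc_ne_last' a ha
    · exact Finset.disjoint_empty_right _
  rw [SimpleGraph.degree, h, Finset.card_union_of_disjoint hdisj, Finset.card_map]
  congr 1
  split_ifs <;> simp

lemma exists_unique_nbr (S : SimpleGraph (Fin (m+1))) (h1 : S.degree (Fin.last m) = 1) :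
    ∃ j : Fin m, ∀ w, S.Adj (Fin.last m) w ↔ w = j.castSucc := by
  obtain ⟨x, hx⟩ := Finset.card_eq_one.mp h1
  have hxl : x ≠ Fin.last m := by
    intro h
    have hmem : x ∈ S.neighborFinset (Fin.last m) := by rw [hx]; simp
    rw [mem_neighborFinset] at hmem
    exact S.irrefl (h ▸ hmem)
  obtain ⟨j, hj⟩ := Fin.eq_castSucc_of_ne_last hxl
  exact ⟨j, fun w => by rw [← mem_neighborFinset, hx, Finset.mem_singleton, hj]⟩

lemma delete_isTree {S : SimpleGraph (Fin (m+1))} {j : Fin m} (hS : S.IsTree) (hm : 0 < m)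
    (hx : ∀ w, S.Adj (Fin.last m) w ↔ w = j.castSucc) :
    (S.comap Fin.castSucc).IsTree := by
  haveI : Nonempty (Fin m) := ⟨⟨0, hm⟩⟩
  constructor
  · constructor
    intro a b
    obtain ⟨p, hp⟩ := exists_walk_avoid hS.isConnected (fun w h => (hx w).mp h)
      (Fin.castSucc_lt_last a).ne (Fin.castSucc_lt_last b).ne
    have hsupp : ∀ w ∈ p.support, w ∈ Set.range (Fin.castSucc : Fin m → Fin (m+1)) := by
      intro w hw
      obtain ⟨y, hy⟩ := Fin.eq_castSucc_of_ne_last (fun h => hp (h ▸ hw))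
      exact ⟨y, hy⟩
    obtain ⟨q, _, _⟩ := walk_comap (Fin.castSucc_injective m) p hsupp a b rfl rfl
    exact ⟨q⟩
  · intro a q hq
    exact hS.IsAcyclic (q.map (Hom.comap Fin.castSucc S))
      (hq.map (f := Hom.comap Fin.castSucc S) (Fin.castSucc_injective m))

lemma delete_attach {S : SimpleGraph (Fin (m+1))} {j : Fin m}
    (hx : ∀ w, S.Adj (Fin.last m) w ↔ w = j.castSucc) :
    attachS (S.comap Fin.castSucc) j = S := by
  ext u w
  refine Fin.lastCases ?_ (fun a => ?_) u
  · rw [attachS_adj_last, hx]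
  · refine Fin.lastCases ?_ (fun b => ?_) w
    · rw [attachS_adj_last', adj_comm, hx]
    · rw [attachS_adj_cast, comap_adj]
noncomputable section Count
open Finset

noncomputable def treeDeg (m : ℕ) (d : Fin m → ℕ) : Finset (SimpleGraph (Fin m)) :=
  Finset.univ.filter (fun G => G.IsTree ∧ ∀ i, G.degree i = d i)

lemma mem_treeDeg {m : ℕ} {d : Fin m → ℕ} {G : SimpleGraph (Fin m)} :
    G ∈ treeDeg m d ↔ G.IsTree ∧ ∀ i, G.degree i = d i := by
  simp [treeDeg]

lemma treeDeg_empty_of_zero {m : ℕ} (hm : 2 ≤ m) {d : Fin m → ℕ} (j : Fin m) (hj : d j = 0) :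
    treeDeg m d = ∅ := by
  rw [Finset.eq_empty_iff_forall_notMem]
  intro G hG
  rw [mem_treeDeg] at hG
  have hpos := degree_pos_of_connected hG.1.isConnected (by rw [Fintype.card_fin]; omega) j
  rw [hG.2 j, hj] at hpos
  omega

lemma comap_degree {m : ℕ} (G : SimpleGraph (Fin m)) (σ : Equiv.Perm (Fin m)) (i : Fin m) :
    (G.comap ⇑σ).degree i = G.degree (σ i) :=
  (degree_eq_of_iso (SimpleGraph.Iso.comap σ G) i).symm

lemma comap_comap {m : ℕ} (G : SimpleGraph (Fin m)) (σ : Equiv.Perm (Fin m)) :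
    (G.comap ⇑σ).comap ⇑σ.symm = G := by
  ext a b
  simp

lemma comap_mem_treeDeg {m : ℕ} {d : Fin m → ℕ} {G : SimpleGraph (Fin m)}
    (σ : Equiv.Perm (Fin m)) (hG : G ∈ treeDeg m d) :
    G.comap ⇑σ ∈ treeDeg m (d ∘ σ) := by
  rw [mem_treeDeg] at hG ⊢
  refine ⟨isTree_of_iso (SimpleGraph.Iso.comap σ G).symm hG.1, fun i => ?_⟩
  exact (comap_degree G σ i).trans (hG.2 (σ i))

lemma treeDeg_card_comp {m : ℕ} (σ : Equiv.Perm (Fin m)) (d : Fin m → ℕ) :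
    (treeDeg m (d ∘ σ)).card = (treeDeg m d).card := by
  refine Finset.card_bij' (fun G _ => G.comap ⇑σ.symm) (fun G _ => G.comap ⇑σ) ?_ ?_ ?_ ?_
  · intro G hG
    have := comap_mem_treeDeg σ.symm hG
    convert this using 2
    ext i
    simp
  · intro G hG
    exact comap_mem_treeDeg σ hG
  · intro G _
    ext a b
    simp
  · intro G _
    ext a b
    simp
lemma top_isTree_fin2 : (⊤ : SimpleGraph (Fin 2)).IsTree := by
  constructor
  · exact SimpleGraph.connected_top
  · intro v c hc
    have h3 := hc.three_le_length
    have hnodup := hc.2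
    have hlen := SimpleGraph.Walk.length_support c
    have hcard := hnodup.length_le_card
    simp only [Fintype.card_fin] at hcard
    have : c.support.tail.length = c.length := by
      have := SimpleGraph.Walk.length_support c
      cases hs : c.support with
      | nil => simp [hs] at this
      | cons a l => simp [hs] at this ⊢; omega
    omega

lemma treeDeg_two {d : Fin 2 → ℕ} (h0 : d 0 = 1) (h1 : d 1 = 1) : (treeDeg 2 d).card = 1 := by
  have htop : (⊤ : SimpleGraph (Fin 2)) ∈ treeDeg 2 d := by
    rw [mem_treeDeg]
    refine ⟨top_isTree_fin2, fun i => ?_⟩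
    fin_cases i <;> simp only [Fin.mk_zero, Fin.mk_one, Fin.isValue, id_eq]
    · rw [h0, SimpleGraph.degree, Finset.card_eq_one]
      exact ⟨1, by
        ext w
        rw [SimpleGraph.mem_neighborFinset, Finset.mem_singleton, SimpleGraph.top_adj]
        revert w
        decide⟩
    · rw [h1, SimpleGraph.degree, Finset.card_eq_one]
      exact ⟨0, by
        ext w
        rw [SimpleGraph.mem_neighborFinset, Finset.mem_singleton, SimpleGraph.top_adj]
        revert w
        decide⟩
  rw [Finset.card_eq_one]
  refine ⟨⊤, Finset.eq_singleton_iff_unique_mem.mpr ⟨htop, ?_⟩⟩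
  intro G hG
  rw [mem_treeDeg] at hG
  have hadj : G.Adj 0 1 := by
    obtain ⟨p⟩ := hG.1.isConnected 0 1
    have hnn : ¬ p.Nil := SimpleGraph.Walk.not_nil_of_ne (by decide)
    have hadj1 : G.Adj 0 (p.getVert 1) := p.adj_snd hnn
    have h2 : ∀ w : Fin 2, w = 0 ∨ w = 1 := by decide
    rcases h2 (p.getVert 1) with h | h
    · rw [h] at hadj1
      exact absurd hadj1 (G.irrefl)
    · rwa [h] at hadj1
  ext a b
  simp only [SimpleGraph.top_adj]
  constructor
  · exact fun h => h.ne
  · intro hne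
    fin_cases a <;> fin_cases b <;> simp_all <;> exact hadj.symm
lemma treeDeg_card_succ {m : ℕ} (hm : 0 < m) (d : Fin (m+1) → ℕ)
    (hd1 : ∀ i, 1 ≤ d i) (hdlast : d (Fin.last m) = 1) :
    (treeDeg (m+1) d).card
      = ∑ j : Fin m,
          (treeDeg m (fun i => if i = j then d i.castSucc - 1 else d i.castSucc)).card := by
  rw [← Finset.card_sigma]
  refine (Finset.card_bij (fun p _ => attachS p.2 p.1) ?_ ?_ ?_).symm
  · rintro ⟨j, T⟩ hp
    rw [Finset.mem_sigma, mem_treeDeg] at hp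
    obtain ⟨-, hT, hTd⟩ := hp
    rw [mem_treeDeg]
    refine ⟨attachS_isTree hT, fun i => ?_⟩
    refine Fin.lastCases ?_ (fun b => ?_) i
    · rw [attachS_degree_last, hdlast]
    · rw [attachS_degree_cast, hTd b]
      have := hd1 b.castSucc
      split_ifs with hbj <;> omega
  · rintro ⟨j, T⟩ h1 ⟨j', T'⟩ h2 heq
    simp only at heq
    have hjj : j.castSucc = j'.castSucc := by
      have h := (attachS_adj_last (T := T) (j := j) (w := j.castSucc)).mpr rfl
      rw [heq] at h
      exact attachS_adj_last.mp h
    have hj : j = j' := Fin.castSucc_inj.mp hjj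
    subst hj
    have hTT : T = T' := by
      have := congrArg (fun S => SimpleGraph.comap Fin.castSucc S) heq
      simpa only [attachS_comap] using this
    subst hTT
    rfl
  · intro G hG
    rw [mem_treeDeg] at hG
    obtain ⟨j, hj⟩ := exists_unique_nbr G (by rw [hG.2]; exact hdlast)
    refine ⟨⟨j, G.comap Fin.castSucc⟩, ?_, ?_⟩
    · rw [Finset.mem_sigma]
      refine ⟨Finset.mem_univ _, ?_⟩
      rw [mem_treeDeg]
      refine ⟨delete_isTree hG.1 hm hj, fun i => ?_⟩
      show (G.comap Fin.castSucc).degree i = if i = j then d i.castSucc - 1 else d i.castSucc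
      have hgd : G.degree i.castSucc
          = (G.comap Fin.castSucc).degree i + (if i = j then 1 else 0) := by
        conv_lhs => rw [← delete_attach (S := G) hj]
        exact attachS_degree_cast
      rw [hG.2] at hgd
      by_cases hij : i = j
      · rw [if_pos hij] at hgd ⊢
        omega
      · rw [if_neg hij] at hgd ⊢
        omega
    · exact delete_attach hj
lemma countAux : ∀ m : ℕ, 2 ≤ m → ∀ d : Fin m → ℕ, (∀ i, 1 ≤ d i) →
    (∑ i, d i = 2 * m - 2) →
    (treeDeg m d).card * ∏ i, (d i - 1).factorial = (m - 2).factorial := by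
  intro m hm
  induction m, hm using Nat.le_induction with
  | base =>
    intro d hd1 hsum
    rw [Fin.sum_univ_two] at hsum
    have h0 : d 0 = 1 := by have := hd1 0; have := hd1 1; omega
    have h1 : d 1 = 1 := by have := hd1 0; have := hd1 1; omega
    rw [treeDeg_two h0 h1, Fin.prod_univ_two, h0, h1]
    simp
  | succ m hm IH =>
    intro d hd1 hsum
    obtain ⟨k, hk⟩ : ∃ k, d k = 1 := by
      by_contra h
      push_neg at h
      have h2 : ∀ i : Fin (m+1), 2 ≤ d i := fun i => by have := hd1 i; have := h i; omega
      have h3 : (m+1) * 2 ≤ ∑ i, d i := by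
        calc (m+1) * 2 = ∑ _i : Fin (m+1), 2 := by
              simp [Finset.sum_const, Finset.card_univ, mul_comm]
          _ ≤ ∑ i, d i := Finset.sum_le_sum (fun i _ => h2 i)
      omega
    set σ := Equiv.swap k (Fin.last m) with hσ
    set d2 : Fin (m+1) → ℕ := d ∘ σ with hd2
    have hcard : (treeDeg (m+1) d2).card = (treeDeg (m+1) d).card := treeDeg_card_comp σ d
    have hprod : ∏ i, (d2 i - 1).factorial = ∏ i, (d i - 1).factorial :=
      Equiv.prod_comp σ (fun i => (d i - 1).factorial)
    have hsum2 : ∑ i, d2 i = 2 * (m+1) - 2 := by rw [← hsum]; exact Equiv.sum_comp σ d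
    have hd21 : ∀ i, 1 ≤ d2 i := fun i => hd1 _
    have hd2last : d2 (Fin.last m) = 1 := by
      simp only [hd2, hσ, Function.comp_apply, Equiv.swap_apply_right]
      exact hk
    rw [← hcard, ← hprod]
    rw [treeDeg_card_succ (by omega) d2 hd21 hd2last]
    have hEsum : ∑ i : Fin m, (d2 i.castSucc - 1) = m - 1 := by
      have h1 : ∑ i : Fin m, d2 i.castSucc + d2 (Fin.last m) = 2*(m+1) - 2 := by
        rw [← hsum2, Fin.sum_univ_castSucc]
      have h2 : ∑ i : Fin m, d2 i.castSucc = ∑ i : Fin m, ((d2 i.castSucc - 1) + 1) :=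
        Finset.sum_congr rfl (fun i _ => by have := hd21 i.castSucc; omega)
      have h3 : ∑ i : Fin m, ((d2 i.castSucc - 1) + 1)
          = (∑ i : Fin m, (d2 i.castSucc - 1)) + m := by
        rw [Finset.sum_add_distrib]
        simp
      omega
    have hprodsplit : ∏ i : Fin (m+1), (d2 i - 1).factorial
        = ∏ i : Fin m, (d2 i.castSucc - 1).factorial := by
      rw [Fin.prod_univ_castSucc, hd2last]
      simp
    rw [hprodsplit, Finset.sum_mul]
    set Q := ∏ i : Fin m, (d2 i.castSucc - 1).factorial with hQ
    have hterm : ∀ j : Fin m,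
        (treeDeg m (fun i => if i = j then d2 i.castSucc - 1 else d2 i.castSucc)).card * Q
          = (d2 j.castSucc - 1) * (m - 2).factorial := by
      intro j
      set dj : Fin m → ℕ := fun i => if i = j then d2 i.castSucc - 1 else d2 i.castSucc with hdj
      by_cases h2j : 2 ≤ d2 j.castSucc
      · have hdj1 : ∀ i, 1 ≤ dj i := by
          intro i
          rw [hdj]
          dsimp only
          split_ifs with hij
          · subst hij; omega
          · exact hd21 _
        have hsumdj : ∑ i, dj i = 2 * m - 2 := by
          have hA : ∑ i : Fin m, d2 i.castSucc
              = d2 j.castSucc + ∑ i ∈ Finset.univ.erase j, d2 i.castSucc :=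
            (Finset.add_sum_erase _ _ (Finset.mem_univ j)).symm
          have hB : ∑ i, dj i = dj j + ∑ i ∈ Finset.univ.erase j, dj i :=
            (Finset.add_sum_erase _ _ (Finset.mem_univ j)).symm
          have hC : ∑ i ∈ Finset.univ.erase j, dj i
              = ∑ i ∈ Finset.univ.erase j, d2 i.castSucc :=
            Finset.sum_congr rfl (fun i hi => by
              rw [hdj]; dsimp only; rw [if_neg (Finset.ne_of_mem_erase hi)])
          have hD : ∑ i : Fin m, d2 i.castSucc + 1 = 2*(m+1) - 2 := by
            rw [← hsum2, Fin.sum_univ_castSucc, hd2last]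
          have hE : dj j = d2 j.castSucc - 1 := by rw [hdj]; dsimp only; rw [if_pos rfl]
          omega
        have hIH := IH dj hdj1 hsumdj
        have hQsplit : Q = (d2 j.castSucc - 1) * ∏ i, (dj i - 1).factorial := by
          rw [hQ]
          have h1 : ∏ i : Fin m, (d2 i.castSucc - 1).factorial
              = (d2 j.castSucc - 1).factorial
                * ∏ i ∈ Finset.univ.erase j, (d2 i.castSucc - 1).factorial :=
            (Finset.mul_prod_erase _ _ (Finset.mem_univ j)).symm
          have h2 : ∏ i : Fin m, (dj i - 1).factorial
              = (dj j - 1).factorial * ∏ i ∈ Finset.univ.erase j, (dj i - 1).factorial :=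
            (Finset.mul_prod_erase _ _ (Finset.mem_univ j)).symm
          have h3 : ∏ i ∈ Finset.univ.erase j, (dj i - 1).factorial
              = ∏ i ∈ Finset.univ.erase j, (d2 i.castSucc - 1).factorial :=
            Finset.prod_congr rfl (fun i hi => by
              rw [hdj]; dsimp only; rw [if_neg (Finset.ne_of_mem_erase hi)])
          have hE : dj j = d2 j.castSucc - 1 := by rw [hdj]; dsimp only; rw [if_pos rfl]
          have hE2 : dj j - 1 = d2 j.castSucc - 2 := by rw [hE]; omega
          have hfac : (d2 j.castSucc - 1).factorial
              = (d2 j.castSucc - 1) * (d2 j.castSucc - 2).factorial := by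
            have hn : d2 j.castSucc - 1 = (d2 j.castSucc - 2) + 1 := by omega
            rw [hn, Nat.factorial_succ, ← hn]
          rw [h1, h2, h3, hE2, hfac]
          ring
        rw [hQsplit, ← mul_assoc, mul_comm _ (d2 j.castSucc - 1), mul_assoc, hIH]
      · have h1 : d2 j.castSucc = 1 := by have := hd21 j.castSucc; omega
        have hz : dj j = 0 := by rw [hdj]; dsimp only; rw [if_pos rfl, h1]
        have hempty := treeDeg_empty_of_zero (by omega : 2 ≤ m) j hz
        rw [hempty, Finset.card_empty, zero_mul, h1]
        simp
    rw [Finset.sum_congr rfl (fun j _ => hterm j), ← Finset.sum_mul, hEsum]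
    have hx : m + 1 - 2 = (m - 2) + 1 := by omega
    have hy : m - 1 = (m - 2) + 1 := by omega
    rw [hx, Nat.factorial_succ, hy]
lemma treeDeg_card_eq_multinomial {m : ℕ} (hm : 2 ≤ m) (k : Fin m → ℕ)
    (hk : ∑ i, k i = m - 2) :
    (treeDeg m (fun i => k i + 1)).card = Nat.multinomial Finset.univ k := by
  have hsum : ∑ i : Fin m, (k i + 1) = 2 * m - 2 := by
    rw [Finset.sum_add_distrib, hk]
    simp only [Finset.sum_const, Finset.card_univ, Fintype.card_fin, smul_eq_mul, mul_one]
    omega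
  have h := countAux m hm (fun i => k i + 1) (fun i => Nat.succ_le_succ (Nat.zero_le _)) hsum
  simp only [Nat.add_sub_cancel] at h
  have hspec := Nat.multinomial_spec Finset.univ k
  rw [hk] at hspec
  have hpos : 0 < ∏ i, (k i).factorial :=
    Finset.prod_pos (fun i _ => Nat.factorial_pos _)
  exact Nat.eq_of_mul_eq_mul_right hpos (by rw [h, ← hspec]; ring)

end Count

/-- **Cayley's degree generating function for labeled trees.**
For `m ≥ 2` and variables `z 1, …, z m` in a commutative ring, the sum over all
trees `T` on the vertex set `Fin m` of `∏ i, (z i) ^ (degree of i in T)` equals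
`z 1 ⋯ z m · (z 1 + ⋯ + z m) ^ (m - 2)`. -/
theorem cayley_degree_generating_function {R : Type*} [CommRing R]
    (m : ℕ) (hm : 2 ≤ m) (z : Fin m → R) :
    ∑ G ∈ Finset.univ.filter (fun G : SimpleGraph (Fin m) => G.IsTree),
      ∏ i : Fin m, z i ^ G.degree i
    = (∏ i : Fin m, z i) * (∑ i : Fin m, z i) ^ (m - 2) := by
  have hmapsto : ∀ G ∈ Finset.univ.filter (fun G : SimpleGraph (Fin m) => G.IsTree),
      (fun i => G.degree i - 1) ∈ Finset.piAntidiag Finset.univ (m - 2) := by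
    intro G hG
    rw [Finset.mem_filter] at hG
    rw [Finset.mem_piAntidiag]
    have hdegpos : ∀ i, 1 ≤ G.degree i :=
      fun i => degree_pos_of_connected hG.2.isConnected (by rw [Fintype.card_fin]; omega) i
    have hsumdeg : ∑ i, G.degree i = 2 * (Fintype.card (Fin m) - 1) := tree_sum_degree hG.2
    rw [Fintype.card_fin] at hsumdeg
    have h2 : ∑ i : Fin m, (G.degree i - 1) + m = ∑ i, G.degree i := by
      have h3 : ∑ i : Fin m, G.degree i = ∑ i : Fin m, ((G.degree i - 1) + 1) :=
        Finset.sum_congr rfl fun i _ => by have := hdegpos i; omega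
      rw [h3, Finset.sum_add_distrib]
      simp
    exact ⟨by omega, fun i _ => Finset.mem_univ i⟩
  have hfw := Finset.sum_fiberwise_of_maps_to (g := fun (G : SimpleGraph (Fin m)) (i : Fin m) => G.degree i - 1)
    hmapsto (fun (G : SimpleGraph (Fin m)) => ∏ i : Fin m, z i ^ G.degree i)
  rw [← hfw]
  rw [Finset.sum_pow_eq_sum_piAntidiag Finset.univ z (m-2), Finset.mul_sum]
  refine Finset.sum_congr rfl (fun y hy => ?_)
  rw [Finset.mem_piAntidiag] at hy
  have hfib : (Finset.univ.filter (fun G : SimpleGraph (Fin m) => G.IsTree)).filter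
      (fun G => (fun i => G.degree i - 1) = y) = treeDeg m (fun i => y i + 1) := by
    ext G
    rw [Finset.mem_filter, Finset.mem_filter, mem_treeDeg]
    constructor
    · rintro ⟨⟨-, hT⟩, hfun⟩
      refine ⟨hT, fun i => ?_⟩
      have h1 : G.degree i - 1 = y i := congrFun hfun i
      have := degree_pos_of_connected hT.isConnected (by rw [Fintype.card_fin]; omega) i
      omega
    · rintro ⟨hT, hdeg⟩
      exact ⟨⟨Finset.mem_univ _, hT⟩, funext fun i => by rw [hdeg i]; omega⟩
  have hterm : ∀ G ∈ (Finset.univ.filter (fun G : SimpleGraph (Fin m) => G.IsTree)).filter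
      (fun G => (fun i => G.degree i - 1) = y),
      ∏ i : Fin m, z i ^ G.degree i = ∏ i : Fin m, z i ^ (y i + 1) := by
    intro G hG
    rw [hfib, mem_treeDeg] at hG
    exact Finset.prod_congr rfl fun i _ => by rw [hG.2 i]
  rw [Finset.sum_congr rfl hterm, Finset.sum_const, hfib,
    treeDeg_card_eq_multinomial hm y hy.1, nsmul_eq_mul]
  simp only [pow_succ, Finset.prod_mul_distrib]
  ring
end

section
/- Let m ≥ 2 and let v be an integer with 1 ≤ v ≤ m-1. Then the number of trees on the vertex set {1, ..., m} in which vertex 1 has degree exactly v equals binomial(m-2, v-1) · (m-1)^{m-1-v}. -/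
open Classical

namespace TreeCountAux

variable {n : ℕ}

/-- A "good" function on `Fin (n+2)`: parent function of a tree rooted at `0`. -/
def Good (p : Fin (n+2) → Fin (n+2)) : Prop :=
  p 0 = 0 ∧ ∀ x, ∃ k, p^[k] x = 0

/-- Depth: number of steps to reach `0`. -/
noncomputable def dep (p : Fin (n+2) → Fin (n+2)) (x : Fin (n+2)) : ℕ :=
  if h : ∃ k, p^[k] x = 0 then Nat.find h else 0

theorem dep_spec {p : Fin (n+2) → Fin (n+2)} (hp : Good p) (x : Fin (n+2)) :
    p^[dep p x] x = 0 := by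
  have h := hp.2 x
  rw [dep, dif_pos h]
  exact Nat.find_spec h

theorem dep_min {p : Fin (n+2) → Fin (n+2)} (hp : Good p) {x : Fin (n+2)} {k : ℕ}
    (hk : k < dep p x) : p^[k] x ≠ 0 := by
  have h := hp.2 x
  rw [dep, dif_pos h] at hk
  exact Nat.find_min h hk

theorem dep_le {p : Fin (n+2) → Fin (n+2)} (hp : Good p) {x : Fin (n+2)} {k : ℕ}
    (hk : p^[k] x = 0) : dep p x ≤ k := by
  have h := hp.2 x
  rw [dep, dif_pos h]
  exact Nat.find_le hk

theorem dep_eq_zero_iff {p : Fin (n+2) → Fin (n+2)} (hp : Good p) {x : Fin (n+2)} :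
    dep p x = 0 ↔ x = 0 := by
  constructor
  · intro h
    have := dep_spec hp x
    rwa [h, Function.iterate_zero_apply] at this
  · intro h
    subst h
    exact Nat.le_zero.mp (dep_le hp (by simp))

theorem iterate_zero_fixed {p : Fin (n+2) → Fin (n+2)} (hp : Good p) (k : ℕ) :
    p^[k] 0 = 0 := by
  induction k with
  | zero => simp
  | succ k ih => rw [Function.iterate_succ_apply', ih, hp.1]

theorem iterate_eq_zero_of_le {p : Fin (n+2) → Fin (n+2)} (hp : Good p) {x : Fin (n+2)} {k : ℕ}
    (hk : dep p x ≤ k) : p^[k] x = 0 := by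
  obtain ⟨j, rfl⟩ := Nat.exists_eq_add_of_le hk
  have : p^[j + dep p x] x = 0 := by
    rw [Function.iterate_add_apply, dep_spec hp]
    exact iterate_zero_fixed hp j
  rwa [Nat.add_comm j (dep p x)] at this

theorem dep_succ {p : Fin (n+2) → Fin (n+2)} (hp : Good p) {x : Fin (n+2)} (hx : x ≠ 0) :
    dep p x = dep p (p x) + 1 := by
  have h1 : 0 < dep p x := by
    rcases Nat.eq_zero_or_pos (dep p x) with h | h
    · exact absurd ((dep_eq_zero_iff hp).mp h) hx
    · exact h
  have h2 : dep p (p x) ≤ dep p x - 1 := by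
    apply dep_le hp
    rw [← Function.iterate_succ_apply, Nat.succ_eq_add_one, Nat.sub_add_cancel h1]
    exact dep_spec hp x
  have h3 : dep p x ≤ dep p (p x) + 1 := by
    apply dep_le hp
    rw [Function.iterate_succ_apply]
    exact dep_spec hp (p x)
  omega

theorem no_fixed {p : Fin (n+2) → Fin (n+2)} (hp : Good p) {x : Fin (n+2)} (hx : x ≠ 0) :
    p x ≠ x := by
  intro h
  have := dep_succ hp hx
  rw [h] at this
  omega

theorem no_two_cycle {p : Fin (n+2) → Fin (n+2)} (hp : Good p) {x y : Fin (n+2)}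
    (hx : x ≠ 0) (hy : y ≠ 0) (hxy : p x = y) (hyx : p y = x) : False := by
  have h1 := dep_succ hp hx
  have h2 := dep_succ hp hy
  rw [hxy] at h1
  rw [hyx] at h2
  omega

/-- No periodic point other than 0. -/
theorem no_periodic {p : Fin (n+2) → Fin (n+2)} (hp : Good p) {x : Fin (n+2)} (hx : x ≠ 0)
    {j : ℕ} (hj : 0 < j) (h : p^[j] x = x) : False := by
  have hper : ∀ t, p^[j * t] x = x := by
    intro t
    induction t with
    | zero => simp
    | succ t ih => rw [Nat.mul_succ, Function.iterate_add_apply, h, ih]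
  have := hper (dep p x)
  have h0 : p^[j * dep p x] x = 0 := by
    apply iterate_eq_zero_of_le hp
    calc dep p x = 1 * dep p x := (Nat.one_mul _).symm
    _ ≤ j * dep p x := Nat.mul_le_mul_right _ hj
  rw [this] at h0
  exact hx h0


/-- The child of `0` on the path from `x` to `0`. -/
noncomputable def br (p : Fin (n+2) → Fin (n+2)) (x : Fin (n+2)) : Fin (n+2) :=
  p^[dep p x - 1] x

/-- The children of the root `0`. -/
noncomputable def children (p : Fin (n+2) → Fin (n+2)) : Finset (Fin (n+2)) :=
  Finset.univ.filter (fun x => x ≠ 0 ∧ p x = 0)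

theorem mem_children {p : Fin (n+2) → Fin (n+2)} {x : Fin (n+2)} :
    x ∈ children p ↔ x ≠ 0 ∧ p x = 0 := by
  simp [children]

theorem br_mem_children {p : Fin (n+2) → Fin (n+2)} (hp : Good p) {x : Fin (n+2)}
    (hx : x ≠ 0) : br p x ∈ children p := by
  have h1 : 0 < dep p x := by
    rcases Nat.eq_zero_or_pos (dep p x) with h | h
    · exact absurd ((dep_eq_zero_iff hp).mp h) hx
    · exact h
  rw [mem_children]
  constructor
  · exact dep_min hp (by omega)
  · have h2 : p^[dep p x - 1 + 1] x = 0 := by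
      have : dep p x - 1 + 1 = dep p x := by omega
      rw [this]; exact dep_spec hp x
    rw [Function.iterate_succ_apply'] at h2
    exact h2

theorem br_eq_self {p : Fin (n+2) → Fin (n+2)} (hp : Good p) {x : Fin (n+2)}
    (hx : x ∈ children p) : br p x = x := by
  rw [mem_children] at hx
  have hd : dep p x = 1 := by
    have h1 : dep p x ≤ 1 := dep_le hp (by simpa using hx.2)
    have h2 : dep p x ≠ 0 := fun h => hx.1 ((dep_eq_zero_iff hp).mp h)
    omega
  rw [br, hd]
  simp

theorem br_apply {p : Fin (n+2) → Fin (n+2)} (hp : Good p) {x : Fin (n+2)}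
    (hx : p x ≠ 0) : br p (p x) = br p x := by
  have hx0 : x ≠ 0 := by
    intro h; subst h; exact hx hp.1
  have hd := dep_succ hp hx0
  have hd2 : 0 < dep p (p x) := by
    rcases Nat.eq_zero_or_pos (dep p (p x)) with h | h
    · exact absurd ((dep_eq_zero_iff hp).mp h) hx
    · exact h
  rw [br, br, hd]
  have : dep p (p x) + 1 - 1 = (dep p (p x) - 1) + 1 := by omega
  rw [this, Function.iterate_succ_apply]

theorem br_iterate {p : Fin (n+2) → Fin (n+2)} (hp : Good p) {x : Fin (n+2)} :
    ∀ k, k < dep p x → br p (p^[k] x) = br p x := by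
  intro k
  induction k with
  | zero => simp
  | succ k ih =>
    intro hk
    have hk' : k < dep p x := by omega
    rw [← ih hk']
    rw [Function.iterate_succ_apply']
    apply br_apply hp
    have := dep_min hp (k := k+1) hk
    rwa [Function.iterate_succ_apply'] at this

/-- If the branch of `x` is not `c` (a child of the root), then the orbit of `x`
never meets `c`. -/
theorem orbit_avoids {p : Fin (n+2) → Fin (n+2)} (hp : Good p) {x c : Fin (n+2)}
    (hc : c ∈ children p) (hbr : br p x ≠ c) : ∀ k, p^[k] x ≠ c := by
  intro k hk
  rcases lt_or_ge k (dep p x) with h | h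
  · have := br_iterate hp k h
    rw [hk, br_eq_self hp hc] at this
    exact hbr this.symm
  · rw [iterate_eq_zero_of_le hp h] at hk
    exact (mem_children.mp hc).1 hk.symm

/-- If the orbit of `x` avoids `c`, iterates of `Function.update p c w` agree with those of `p`. -/
theorem iterate_update_of_avoids {p : Fin (n+2) → Fin (n+2)} {c w x : Fin (n+2)}
    (h : ∀ k, p^[k] x ≠ c) : ∀ k, (Function.update p c w)^[k] x = p^[k] x := by
  intro k
  induction k with
  | zero => simp
  | succ k ih =>
    rw [Function.iterate_succ_apply', Function.iterate_succ_apply', ih,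
      Function.update_of_ne (h k)]

theorem iterate_update_until {p : Fin (n+2) → Fin (n+2)} {c w x : Fin (n+2)} {k0 : ℕ}
    (h : ∀ k < k0, p^[k] x ≠ c) : ∀ k ≤ k0, (Function.update p c w)^[k] x = p^[k] x := by
  intro k hk
  induction k with
  | zero => simp
  | succ k ih =>
    rw [Function.iterate_succ_apply', Function.iterate_succ_apply',
      ih (by omega), Function.update_of_ne (h k (by omega))]

/-- If `c` reaches `0` under the updated map, then everything does. -/
theorem good_update {p : Fin (n+2) → Fin (n+2)} (hp : Good p) {c w : Fin (n+2)} (hc : c ≠ 0)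
    (hreach : ∃ j, (Function.update p c w)^[j] c = 0) : Good (Function.update p c w) := by
  set p' := Function.update p c w with hp'
  constructor
  · rw [hp', Function.update_of_ne (Ne.symm hc), hp.1]
  · intro x
    by_cases hhit : ∃ k, p^[k] x = c
    · obtain ⟨j, hj⟩ := hreach
      have hmin : ∀ k < Nat.find hhit, p^[k] x ≠ c := fun k hk => Nat.find_min hhit hk
      have : p'^[Nat.find hhit] x = c := by
        rw [iterate_update_until hmin _ le_rfl]
        exact Nat.find_spec hhit
      exact ⟨j + Nat.find hhit, by rw [Function.iterate_add_apply, this, hj]⟩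
    · push_neg at hhit
      exact ⟨dep p x, by rw [iterate_update_of_avoids hhit, dep_spec hp]⟩

theorem dep_congr {p q : Fin (n+2) → Fin (n+2)} (hp : Good p) (hq : Good q) {x : Fin (n+2)}
    (h : ∀ k, q^[k] x = p^[k] x) : dep q x = dep p x := by
  apply le_antisymm
  · exact dep_le hq (by rw [h]; exact dep_spec hp x)
  · exact dep_le hp (by rw [← h]; exact dep_spec hq x)


section Moves

variable {p q : Fin (n+2) → Fin (n+2)} {c w s : Fin (n+2)}

theorem good_forward (hp : Good p) (hc : c ∈ children p) (hw : w ≠ 0)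
    (hbr : br p w ≠ c) : Good (Function.update p c w) := by
  apply good_update hp (mem_children.mp hc).1
  have havoid : ∀ k, p^[k] w ≠ c := orbit_avoids hp hc hbr
  refine ⟨dep p w + 1, ?_⟩
  rw [Function.iterate_succ_apply, Function.update_self,
    iterate_update_of_avoids havoid, dep_spec hp]

theorem children_forward (hc : c ∈ children p) (hw : w ≠ 0) :
    children (Function.update p c w) = (children p).erase c := by
  ext y
  rw [mem_children, Finset.mem_erase, mem_children]
  by_cases hyc : y = c
  · subst hyc
    simp [Function.update_self, hw]
  · rw [Function.update_of_ne hyc]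
    tauto

theorem good_backward (hq : Good q) (hs : s ≠ 0) :
    Good (Function.update q s 0) := by
  apply good_update hq hs
  exact ⟨1, by simp [Function.update_self]⟩

theorem children_backward (hq : Good q) (hs : s ≠ 0) :
    children (Function.update q s 0) = insert s (children q) := by
  ext y
  rw [mem_children, Finset.mem_insert, mem_children]
  by_cases hys : y = s
  · subst hys
    simp [Function.update_self, hs]
  · rw [Function.update_of_ne hys]
    tauto

theorem orbit_avoids_backward (hq : Good q) (hs : s ≠ 0) (hqs : q s ≠ 0) :
    ∀ k, q^[k] (q s) ≠ s := by
  intro k hk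
  have : q^[k + 1] s = s := by rw [Function.iterate_add_apply]; simpa using hk
  exact no_periodic hq hs (by omega) this

theorem br_backward (hq : Good q) (hs : s ≠ 0) (hqs : q s ≠ 0) :
    br (Function.update q s 0) (q s) ≠ s := by
  set q' := Function.update q s 0 with hq'def
  have hq' : Good q' := good_backward hq hs
  have havoid := orbit_avoids_backward hq hs hqs
  have hiter : ∀ k, q'^[k] (q s) = q^[k] (q s) := iterate_update_of_avoids havoid
  have hdep : dep q' (q s) = dep q (q s) := dep_congr hq hq' hiter
  rw [br, hdep, hiter]
  exact havoid _

end Moves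


section Counting

/-- Good parent functions whose root has exactly `v` children. -/
noncomputable def Pv (n v : ℕ) : Finset (Fin (n+2) → Fin (n+2)) :=
  Finset.univ.filter (fun p => Good p ∧ (children p).card = v)

theorem mem_Pv {v : ℕ} {p : Fin (n+2) → Fin (n+2)} :
    p ∈ Pv n v ↔ Good p ∧ (children p).card = v := by simp [Pv]

theorem card_nonzero : (Finset.univ.filter (fun x : Fin (n+2) => x ≠ 0)).card = n + 1 := by
  rw [Finset.filter_ne']
  rw [Finset.card_erase_of_mem (Finset.mem_univ _)]
  simp

theorem sum_fibers {p : Fin (n+2) → Fin (n+2)} (hp : Good p) :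
    ∑ c ∈ children p,
      ((Finset.univ.filter (fun x : Fin (n+2) => x ≠ 0)).filter (fun x => br p x = c)).card
      = n + 1 := by
  have h := (Finset.card_eq_sum_card_fiberwise (f := br p) (t := children p)
    (s := Finset.univ.filter (fun x : Fin (n+2) => x ≠ 0)) (fun x hx =>
    br_mem_children hp (by simpa using (Finset.mem_filter.mp hx).2)))
  rw [card_nonzero] at h
  exact h.symm

/-- The set of marked pairs `(c, w)` for a fixed good function. -/
theorem card_pairs {v : ℕ} {p : Fin (n+2) → Fin (n+2)} (hp : Good p)
    (hv : (children p).card = v) (hv1 : 1 ≤ v) :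
    (Finset.univ.filter (fun cw : Fin (n+2) × Fin (n+2) =>
        cw.1 ∈ children p ∧ cw.2 ≠ 0 ∧ br p cw.2 ≠ cw.1)).card = (n+1) * (v-1) := by
  classical
  set s0 := Finset.univ.filter (fun x : Fin (n+2) => x ≠ 0) with hs0
  have hfib : ∀ c ∈ children p,
      (s0.filter (fun x => br p x ≠ c)).card + (s0.filter (fun x => br p x = c)).card = n + 1 := by
    intro c _
    rw [Nat.add_comm, Finset.card_filter_add_card_filter_not]
    exact card_nonzero
  have hsum : ∑ c ∈ children p, (s0.filter (fun x => br p x ≠ c)).card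
      + ∑ c ∈ children p, (s0.filter (fun x => br p x = c)).card = v * (n+1) := by
    rw [← Finset.sum_add_distrib]
    rw [Finset.sum_congr rfl hfib, Finset.sum_const, hv, smul_eq_mul]
  have hsum2 : ∑ c ∈ children p, (s0.filter (fun x => br p x = c)).card = n + 1 :=
    sum_fibers hp
  have hkey : ∑ c ∈ children p, (s0.filter (fun x => br p x ≠ c)).card = (n+1) * (v-1) := by
    obtain ⟨u, rfl⟩ : ∃ u, v = u + 1 := ⟨v - 1, by omega⟩
    have : (u+1) * (n+1) = u * (n+1) + (n+1) := by ring
    rw [this] at hsum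
    simp only [Nat.add_sub_cancel]
    rw [Nat.mul_comm]
    omega
  rw [← hkey]
  rw [Finset.card_eq_sum_card_fiberwise
    (f := fun cw : Fin (n+2) × Fin (n+2) => cw.1) (t := children p)
    (fun cw hcw => (Finset.mem_filter.mp hcw).2.1)]
  apply Finset.sum_congr rfl
  intro c hc
  apply Finset.card_nbij' (i := fun cw => cw.2) (j := fun w => (c, w))
  · intro a ha
    simp only [Finset.mem_coe, Finset.mem_filter] at ha ⊢
    refine ⟨Finset.mem_filter.mpr ⟨Finset.mem_univ _, ha.1.2.2.1⟩, ?_⟩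
    rw [← ha.2]
    exact ha.1.2.2.2
  · intro w hw
    simp only [Finset.mem_coe, hs0, Finset.mem_filter, Finset.mem_univ, true_and] at hw ⊢
    exact ⟨⟨hc, hw.1, hw.2⟩, trivial⟩
  · intro a ha
    simp only [Finset.mem_coe, Finset.mem_filter] at ha
    rw [← ha.2]
  · intro w _
    rfl

theorem card_marks {v : ℕ} {q : Fin (n+2) → Fin (n+2)} (hq : Good q)
    (hv : (children q).card = v) :
    (Finset.univ.filter (fun s : Fin (n+2) => s ≠ 0 ∧ q s ≠ 0)).card = n + 1 - v := by
  classical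
  set s0 := Finset.univ.filter (fun x : Fin (n+2) => x ≠ 0) with hs0
  have h1 : (s0.filter (fun x => q x = 0)).card + (s0.filter (fun x => ¬ (q x = 0))).card
      = s0.card := Finset.card_filter_add_card_filter_not _
  have h2 : s0.filter (fun x => q x = 0) = children q := by
    rw [hs0, Finset.filter_filter]
    rfl
  have h3 : Finset.univ.filter (fun s : Fin (n+2) => s ≠ 0 ∧ q s ≠ 0)
      = s0.filter (fun x => ¬ (q x = 0)) := by
    rw [hs0, Finset.filter_filter]
  rw [h3]
  rw [h2, hv, card_nonzero] at h1
  omega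

end Counting


section Recursion

/-- Triples `(p, c, w)`: a good function with `v` children of the root, a child `c`,
and a valid new parent `w` for `c`. -/
noncomputable def Sset (n v : ℕ) :
    Finset ((Fin (n+2) → Fin (n+2)) × Fin (n+2) × Fin (n+2)) :=
  Finset.univ.filter (fun t => (Good t.1 ∧ (children t.1).card = v) ∧
    t.2.1 ∈ children t.1 ∧ t.2.2 ≠ 0 ∧ br t.1 t.2.2 ≠ t.2.1)

/-- Pairs `(q, s)`: a good function with `v` children of the root and a marked
non-root vertex `s` that is not a child of the root. -/
noncomputable def Tset (n v : ℕ) : Finset ((Fin (n+2) → Fin (n+2)) × Fin (n+2)) :=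
  Finset.univ.filter (fun t => (Good t.1 ∧ (children t.1).card = v) ∧
    t.2 ≠ 0 ∧ t.1 t.2 ≠ 0)

theorem card_Sset {v : ℕ} (hv1 : 1 ≤ v) :
    (Sset n v).card = (Pv n v).card * ((n+1) * (v-1)) := by
  classical
  rw [Finset.card_eq_sum_card_fiberwise (f := fun t => t.1) (t := Pv n v)
    (fun t ht => mem_Pv.mpr (Finset.mem_filter.mp ht).2.1)]
  rw [Finset.sum_congr rfl (fun p hp => ?_), Finset.sum_const, smul_eq_mul]
  obtain ⟨hgood, hcard⟩ := mem_Pv.mp hp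
  rw [← card_pairs hgood hcard hv1]
  apply Finset.card_nbij' (i := fun t => t.2) (j := fun cw => (p, cw))
  · intro a ha
    simp only [Finset.mem_coe, Sset, Finset.mem_filter, Finset.mem_univ, true_and] at ha ⊢
    rw [← ha.2]
    exact ha.1.2
  · intro cw hcw
    simp only [Finset.mem_coe, Sset, Finset.mem_filter, Finset.mem_univ, true_and] at hcw ⊢
    exact ⟨⟨⟨hgood, hcard⟩, hcw⟩, trivial⟩
  · intro a ha
    simp only [Finset.mem_coe, Finset.mem_filter] at ha
    rw [← ha.2]
  · intro cw _
    rfl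

theorem card_Tset (v : ℕ) :
    (Tset n v).card = (Pv n v).card * (n + 1 - v) := by
  classical
  rw [Finset.card_eq_sum_card_fiberwise (f := fun t => t.1) (t := Pv n v)
    (fun t ht => mem_Pv.mpr (Finset.mem_filter.mp ht).2.1)]
  rw [Finset.sum_congr rfl (fun q hq => ?_), Finset.sum_const, smul_eq_mul]
  obtain ⟨hgood, hcard⟩ := mem_Pv.mp hq
  rw [← card_marks hgood hcard]
  apply Finset.card_nbij' (i := fun t => t.2) (j := fun w => (q, w))
  · intro a ha
    simp only [Finset.mem_coe, Tset, Finset.mem_filter, Finset.mem_univ, true_and] at ha ⊢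
    rw [← ha.2]
    exact ha.1.2
  · intro w hw
    simp only [Finset.mem_coe, Tset, Finset.mem_filter, Finset.mem_univ, true_and] at hw ⊢
    exact ⟨⟨⟨hgood, hcard⟩, hw⟩, trivial⟩
  · intro a ha
    simp only [Finset.mem_coe, Finset.mem_filter] at ha
    rw [← ha.2]
  · intro w _
    rfl

theorem card_Sset_eq_card_Tset {v : ℕ} (hv1 : 1 ≤ v) :
    (Sset n v).card = (Tset n (v-1)).card := by
  classical
  apply Finset.card_nbij'
    (i := fun t => (Function.update t.1 t.2.1 t.2.2, t.2.1))
    (j := fun t => (Function.update t.1 t.2 0, t.2, t.1 t.2))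
  · intro a ha
    simp only [Finset.mem_coe, Sset, Tset, Finset.mem_filter, Finset.mem_univ, true_and] at ha ⊢
    obtain ⟨⟨hgood, hcard⟩, hc, hw, hbr⟩ := ha
    have hgood' := good_forward hgood hc hw hbr
    refine ⟨⟨hgood', ?_⟩, (mem_children.mp hc).1, ?_⟩
    · rw [children_forward hc hw, Finset.card_erase_of_mem hc, hcard]
    · rw [Function.update_self]
      exact hw
  · intro a ha
    simp only [Finset.mem_coe, Sset, Tset, Finset.mem_filter, Finset.mem_univ, true_and] at ha ⊢
    obtain ⟨⟨hgood, hcard⟩, hs, hqs⟩ := ha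
    have hgood' := good_backward hgood hs
    refine ⟨⟨hgood', ?_⟩, ?_, hqs, br_backward hgood hs hqs⟩
    · rw [children_backward hgood hs, Finset.card_insert_of_notMem, hcard]
      · omega
      · rw [mem_children]
        tauto
    · rw [mem_children]
      exact ⟨hs, Function.update_self _ _ _⟩
  · intro a ha
    simp only [Finset.mem_coe, Sset, Finset.mem_filter, Finset.mem_univ, true_and] at ha
    obtain ⟨⟨hgood, hcard⟩, hc, hw, hbr⟩ := ha
    obtain ⟨p, c, w⟩ := a
    simp only at hc hw hbr ⊢
    have h1 : Function.update p c w c = w := Function.update_self _ _ _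
    have h2 : Function.update (Function.update p c w) c 0 = p := by
      funext y
      by_cases hyc : y = c
      · subst hyc
        rw [Function.update_self, (mem_children.mp hc).2]
      · rw [Function.update_of_ne hyc, Function.update_of_ne hyc]
    rw [h1, h2]
  · intro a ha
    simp only [Finset.mem_coe, Tset, Finset.mem_filter, Finset.mem_univ, true_and] at ha
    obtain ⟨⟨hgood, hcard⟩, hs, hqs⟩ := ha
    obtain ⟨q, t⟩ := a
    simp only at hs hqs ⊢
    have h1 : Function.update q t 0 t = 0 := Function.update_self _ _ _
    have h2 : Function.update (Function.update q t 0) t (q t) = q := by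
      funext y
      by_cases hyt : y = t
      · subst hyt
        rw [Function.update_self]
      · rw [Function.update_of_ne hyt, Function.update_of_ne hyt]
    rw [h2]

/-- The key recursion. -/
theorem Pv_recursion {v : ℕ} (hv1 : 1 ≤ v) :
    (Pv n (v+1)).card * ((n+1) * v) = (Pv n v).card * (n + 1 - v) := by
  have h1 := card_Sset (n := n) (v := v+1) (by omega)
  have h2 := card_Tset (n := n) v
  have h3 := card_Sset_eq_card_Tset (n := n) (v := v+1) (by omega)
  simp only [Nat.add_sub_cancel] at h1 h3
  rw [← h1, h3, h2]

theorem Pv_top : (Pv n (n+1)).card = 1 := by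
  classical
  have : Pv n (n+1) = {fun _ => (0 : Fin (n+2))} := by
    ext p
    rw [mem_Pv, Finset.mem_singleton]
    constructor
    · rintro ⟨hgood, hcard⟩
      have hsub : children p ⊆ Finset.univ.filter (fun x : Fin (n+2) => x ≠ 0) := by
        intro x hx
        simp [Finset.mem_filter, (mem_children.mp hx).1]
      have heq : children p = Finset.univ.filter (fun x : Fin (n+2) => x ≠ 0) :=
        Finset.eq_of_subset_of_card_le hsub (by rw [card_nonzero, hcard])
      funext y
      by_cases hy : y = 0
      · subst hy; exact hgood.1
      · have : y ∈ children p := by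
          rw [heq]; simp [hy]
        exact (mem_children.mp this).2
    · rintro rfl
      refine ⟨⟨rfl, fun x => ⟨1, rfl⟩⟩, ?_⟩
      have : children (fun _ => (0 : Fin (n+2))) =
          Finset.univ.filter (fun x : Fin (n+2) => x ≠ 0) := by
        ext y; simp [mem_children]
      rw [this, card_nonzero]
  rw [this, Finset.card_singleton]

theorem Pv_card : ∀ k v : ℕ, v = n + 1 - k → k ≤ n → 
    (Pv n v).card = Nat.choose n (v-1) * (n+1) ^ (n+1-v) := by
  intro k
  induction k with
  | zero =>
    intro v hv _
    subst hv
    simp [Pv_top]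
  | succ k ih =>
    intro v hv hk
    have hv' : v = n - k := by omega
    have hvn : v + 1 = n + 1 - k := by omega
    have hIH := ih (v+1) hvn (by omega)
    have hrec := Pv_recursion (n := n) (v := v) (by omega)
    rw [hIH] at hrec
    have hv1 : 1 ≤ v := by omega
    have hvn' : v ≤ n := by omega
    have e1 : (v+1) - 1 = v := by omega
    have e2 : n + 1 - (v+1) = n - v := by omega
    rw [e1, e2] at hrec
    have hkey : Nat.choose n v * (n+1) ^ (n - v) * ((n+1) * v)
        = (Nat.choose n (v-1) * (n+1) ^ (n+1-v)) * (n + 1 - v) := by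
      have hc : Nat.choose n v * v = Nat.choose n (v-1) * (n + 1 - v) := by
        have := Nat.choose_succ_right_eq n (v-1)
        have hv2 : v - 1 + 1 = v := by omega
        rw [hv2] at this
        rw [this]
        congr 1
        omega
      have hpow : (n+1) ^ (n+1-v) = (n+1) ^ (n-v) * (n+1) := by
        have : n + 1 - v = (n - v) + 1 := by omega
        rw [this, pow_succ]
      rw [hpow]
      calc Nat.choose n v * (n+1) ^ (n - v) * ((n+1) * v)
          = (Nat.choose n v * v) * ((n+1) ^ (n-v) * (n+1)) := by ring
        _ = (Nat.choose n (v-1) * (n + 1 - v)) * ((n+1) ^ (n-v) * (n+1)) := by rw [hc]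
        _ = Nat.choose n (v-1) * ((n+1) ^ (n-v) * (n+1)) * (n + 1 - v) := by ring
    rw [hkey] at hrec
    exact (Nat.eq_of_mul_eq_mul_right (by omega) hrec).symm

/-- Final count on the function side. -/
theorem Pv_card_eq {v : ℕ} (hv1 : 1 ≤ v) (hv2 : v ≤ n + 1) :
    (Pv n v).card = Nat.choose n (v-1) * (n+1) ^ (n+1-v) :=
  Pv_card (n + 1 - v) v (by omega) (by omega)

end Recursion


section Graph

open SimpleGraph

/-- The tree associated with a parent function. -/
def GraphOf (p : Fin (n+2) → Fin (n+2)) : SimpleGraph (Fin (n+2)) :=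
  SimpleGraph.fromRel (fun x y => x ≠ 0 ∧ p x = y)

theorem graphOf_adj {p : Fin (n+2) → Fin (n+2)} {x y : Fin (n+2)} :
    (GraphOf p).Adj x y ↔ x ≠ y ∧ ((x ≠ 0 ∧ p x = y) ∨ (y ≠ 0 ∧ p y = x)) := by
  simp [GraphOf]

theorem adj_parent {p : Fin (n+2) → Fin (n+2)} (hp : Good p) {x : Fin (n+2)} (hx : x ≠ 0) :
    (GraphOf p).Adj x (p x) := by
  rw [graphOf_adj]
  exact ⟨Ne.symm (no_fixed hp hx), Or.inl ⟨hx, rfl⟩⟩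

theorem reachable_zero {p : Fin (n+2) → Fin (n+2)} (hp : Good p) (x : Fin (n+2)) :
    (GraphOf p).Reachable x 0 := by
  generalize hd : dep p x = d
  induction d generalizing x with
  | zero =>
    rw [dep_eq_zero_iff hp] at hd
    subst hd
    rfl
  | succ d ih =>
    have hx : x ≠ 0 := by
      intro h; subst h
      rw [(dep_eq_zero_iff hp).mpr rfl] at hd
      omega
    have hdep := dep_succ hp hx
    rw [hd] at hdep
    exact ((adj_parent hp hx).toWalk.reachable).trans (ih (p x) (by omega))

theorem graphOf_connected {p : Fin (n+2) → Fin (n+2)} (hp : Good p) :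
    (GraphOf p).Connected := by
  rw [connected_iff]
  refine ⟨fun x y => (reachable_zero hp x).trans (reachable_zero hp y).symm, ⟨0⟩⟩

theorem neighborFinset_zero {p : Fin (n+2) → Fin (n+2)} (hp : Good p) :
    (GraphOf p).neighborFinset 0 = children p := by
  ext y
  rw [SimpleGraph.mem_neighborFinset, graphOf_adj, mem_children]
  constructor
  · rintro ⟨hne, h | h⟩
    · exact absurd h.1 (by simp)
    · exact ⟨h.1, h.2⟩
  · rintro ⟨hy, hpy⟩
    exact ⟨Ne.symm hy, Or.inr ⟨hy, hpy⟩⟩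

theorem degree_zero {p : Fin (n+2) → Fin (n+2)} (hp : Good p) :
    (GraphOf p).degree 0 = (children p).card := by
  rw [← SimpleGraph.card_neighborFinset_eq_degree, neighborFinset_zero hp]


theorem graphOf_acyclic {p : Fin (n+2) → Fin (n+2)} (hp : Good p) :
    (GraphOf p).IsAcyclic := by
  intro a c0 hc0
  obtain ⟨v, hv_mem, hv_max⟩ := (c0.support.toFinset).exists_max_image (dep p)
    ⟨a, List.mem_toFinset.mpr c0.start_mem_support⟩
  have hv : v ∈ c0.support := List.mem_toFinset.mp hv_mem
  set c := c0.rotate v hv with hcdef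
  have hc : c.IsCycle := hc0.rotate hv
  have hmax : ∀ z ∈ c.support, dep p z ≤ dep p v := by
    intro z hz
    apply hv_max
    rw [List.mem_toFinset]
    rcases (Walk.mem_support_iff _).mp hz with h | h
    · subst h; exact hv
    · have hperm := Walk.support_rotate c0 v hv
      have : z ∈ c0.support.tail := hperm.mem_iff.mp h
      rw [Walk.support_eq_cons]
      exact List.mem_cons_of_mem _ this
  have hnn : ¬c.Nil := hc.not_nil
  set b := c.getVert 1 with hbdef
  have hadj1 : (GraphOf p).Adj v b := c.adj_snd hnn
  have hb_mem : b ∈ c.support := by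
    have h1 : b ∈ c.tail.support := c.tail.start_mem_support
    rw [← c.cons_support_tail hnn]
    exact List.mem_cons_of_mem _ h1
  have hcyc : c.tail.IsPath ∧ s(v, b) ∉ c.tail.edges := by
    have h := hc
    rw [← c.cons_tail_eq hnn] at h
    exact (Walk.cons_isCycle_iff _ _).mp h
  have hlen : 3 ≤ c.length := hc.three_le_length
  have htnn : ¬c.tail.Nil := by
    rw [Walk.not_nil_iff_lt_length]
    have := c.length_tail_add_one hnn
    omega
  set r := c.tail.reverse with hrdef
  have hrnn : ¬r.Nil := by
    rw [Walk.not_nil_iff_lt_length, hrdef, Walk.length_reverse]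
    rw [Walk.not_nil_iff_lt_length] at htnn
    exact htnn
  set u := r.getVert 1 with hudef
  have hadj2 : (GraphOf p).Adj v u := r.adj_snd hrnn
  have hu_edge : s(v, u) ∈ r.edges := by
    have h := r.cons_tail_eq hrnn
    rw [← h, Walk.edges_cons]
    exact List.mem_cons_self
  have hu_edge' : s(v, u) ∈ c.tail.edges := by
    rw [hrdef, Walk.edges_reverse, List.mem_reverse] at hu_edge
    exact hu_edge
  have hne : u ≠ b := by
    intro h
    rw [h] at hu_edge'
    exact hcyc.2 hu_edge'
  have hu_mem : u ∈ c.support := by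
    have h1 : u ∈ r.tail.support := r.tail.start_mem_support
    have h2 : u ∈ r.support := by
      rw [← r.cons_support_tail hrnn]
      exact List.mem_cons_of_mem _ h1
    rw [hrdef, Walk.support_reverse, List.mem_reverse] at h2
    rw [← c.cons_support_tail hnn]
    exact List.mem_cons_of_mem _ h2
  have key : ∀ z ∈ c.support, (GraphOf p).Adj v z → p v = z := by
    intro z hz hadj
    rw [graphOf_adj] at hadj
    rcases hadj.2 with h | h
    · exact h.2
    · exfalso
      have : dep p z = dep p v + 1 := by
        rw [dep_succ hp h.1, h.2]
      have := hmax z hz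
      omega
  have e1 : p v = b := key b hb_mem hadj1
  have e2 : p v = u := key u hu_mem hadj2
  rw [e1] at e2
  exact hne e2.symm

theorem graphOf_isTree {p : Fin (n+2) → Fin (n+2)} (hp : Good p) :
    (GraphOf p).IsTree :=
  ⟨graphOf_connected hp, graphOf_acyclic hp⟩

end Graph


section Inj

open SimpleGraph

theorem graphOf_injective {p q : Fin (n+2) → Fin (n+2)} (hp : Good p) (hq : Good q)
    (h : GraphOf p = GraphOf q) : p = q := by
  suffices H : ∀ d x, dep p x = d → p x = q x by
    exact funext fun x => H (dep p x) x rfl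
  intro d
  induction d using Nat.strong_induction_on with
  | _ d ih =>
    intro x hd
    by_cases hx : x = 0
    · subst hx; rw [hp.1, hq.1]
    · have hadj : (GraphOf q).Adj x (p x) := by
        rw [← h]; exact adj_parent hp hx
      rw [graphOf_adj] at hadj
      rcases hadj.2 with hcase | hcase
      · exact hcase.2.symm
      · exfalso
        have hy0 : p x ≠ 0 := hcase.1
        have hdlt : dep p (p x) < d := by
          have := dep_succ hp hx
          omega
        have hpy : p (p x) = q (p x) := ih _ hdlt (p x) rfl
        rw [hcase.2] at hpy
        exact no_two_cycle hp hx hy0 rfl hpy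

end Inj

section FromTree

open SimpleGraph

variable {G : SimpleGraph (Fin (n+2))}

/-- The unique path from `x` to the root `0` in a tree. -/
noncomputable def theWalk (hG : G.IsTree) (x : Fin (n+2)) : G.Walk x 0 :=
  Classical.choose (hG.existsUnique_path x 0)

theorem theWalk_isPath (hG : G.IsTree) (x : Fin (n+2)) : (theWalk hG x).IsPath :=
  (Classical.choose_spec (hG.existsUnique_path x 0)).1

theorem theWalk_unique (hG : G.IsTree) {x : Fin (n+2)} {w : G.Walk x 0} (hw : w.IsPath) :
    w = theWalk hG x :=
  (Classical.choose_spec (hG.existsUnique_path x 0)).2 w hw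

/-- The parent function of a tree, pointing towards the root `0`. -/
noncomputable def parent (hG : G.IsTree) (x : Fin (n+2)) : Fin (n+2) :=
  if x = 0 then 0 else (theWalk hG x).getVert 1

theorem parent_spec (hG : G.IsTree) {x : Fin (n+2)} (hx : x ≠ 0) :
    G.Adj x (parent hG x) ∧
      (theWalk hG (parent hG x)).length + 1 = (theWalk hG x).length := by
  obtain ⟨y, hadj, w', hw⟩ := Walk.exists_eq_cons_of_ne hx (theWalk hG x)
  have hy : parent hG x = y := by
    rw [parent, if_neg hx, hw, Walk.getVert_cons_succ, Walk.getVert_zero]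
  have hpath : w'.IsPath := by
    have h2 := theWalk_isPath hG x
    rw [hw] at h2
    exact h2.of_cons
  have huniq : w' = theWalk hG y := theWalk_unique hG hpath
  constructor
  · rw [hy]; exact hadj
  · rw [hy, ← huniq, hw, Walk.length_cons]

theorem parent_good (hG : G.IsTree) : Good (parent hG) := by
  constructor
  · rw [parent, if_pos rfl]
  · suffices H : ∀ L x, (theWalk hG x).length = L → ∃ k, (parent hG)^[k] x = 0 by
      exact fun x => H (theWalk hG x).length x rfl
    intro L
    induction L using Nat.strong_induction_on with
    | _ L ih =>
      intro x hL
      by_cases hx : x = 0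
      · exact ⟨0, by simpa using hx⟩
      · obtain ⟨_, hlen⟩ := parent_spec hG hx
        obtain ⟨k, hk⟩ := ih (theWalk hG (parent hG x)).length (by omega) _ rfl
        exact ⟨k + 1, by rw [Function.iterate_add_apply]; simpa using hk⟩

theorem single_edge_isPath {x y : Fin (n+2)} (hadj : G.Adj x y) :
    (Walk.cons hadj Walk.nil).IsPath := by
  rw [Walk.cons_isPath_iff]
  exact ⟨Walk.IsPath.nil, by simp [hadj.ne]⟩

theorem graphOf_parent (hG : G.IsTree) : GraphOf (parent hG) = G := by
  ext x y
  rw [graphOf_adj]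
  constructor
  · rintro ⟨hne, h | h⟩
    · have := (parent_spec hG h.1).1
      rwa [h.2] at this
    · have := (parent_spec hG h.1).1
      rw [h.2] at this
      exact this.symm
  · intro hadj
    refine ⟨hadj.ne, ?_⟩
    by_cases hy : y = 0
    · subst hy
      left
      refine ⟨hadj.ne, ?_⟩
      have huniq : Walk.cons hadj Walk.nil = theWalk hG x :=
        theWalk_unique hG (single_edge_isPath hadj)
      rw [parent, if_neg hadj.ne, ← huniq, Walk.getVert_cons_succ, Walk.getVert_zero]
    · by_cases hx : x = 0
      · subst hx
        right
        refine ⟨hy, ?_⟩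
        have huniq : Walk.cons hadj.symm Walk.nil = theWalk hG y :=
          theWalk_unique hG (single_edge_isPath hadj.symm)
        rw [parent, if_neg hy, ← huniq, Walk.getVert_cons_succ, Walk.getVert_zero]
      · set w := theWalk hG y with hwdef
        by_cases hp : (Walk.cons hadj w).IsPath
        · left
          refine ⟨hx, ?_⟩
          have huniq : Walk.cons hadj w = theWalk hG x := theWalk_unique hG hp
          rw [parent, if_neg hx, ← huniq, Walk.getVert_cons_succ, Walk.getVert_zero]
        · right
          refine ⟨hy, ?_⟩
          have hxs : x ∈ w.support := by
            rw [Walk.cons_isPath_iff] at hp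
            push_neg at hp
            exact hp (theWalk_isPath hG y)
          have htu : (w.takeUntil x hxs).IsPath := (theWalk_isPath hG y).takeUntil hxs
          have hsingle : (Walk.cons hadj.symm Walk.nil : G.Walk y x).IsPath :=
            single_edge_isPath hadj.symm
          have hequ : w.takeUntil x hxs = Walk.cons hadj.symm Walk.nil :=
            (hG.existsUnique_path y x).unique htu hsingle
          have hspec := w.take_spec hxs
          rw [hequ] at hspec
          rw [Walk.cons_append, Walk.nil_append] at hspec
          rw [parent, if_neg hy, ← hwdef, ← hspec, Walk.getVert_cons_succ, Walk.getVert_zero]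

end FromTree


theorem main_count {v : ℕ} (hv1 : 1 ≤ v) (hv2 : v ≤ n + 1) :
    (Finset.univ.filter (fun G : SimpleGraph (Fin (n+2)) =>
        G.IsTree ∧ G.degree 0 = v)).card
      = Nat.choose n (v-1) * (n+1) ^ (n+1-v) := by
  classical
  rw [← Pv_card_eq hv1 hv2]
  symm
  apply Finset.card_bij (i := fun p _ => GraphOf p)
  · intro p hp
    obtain ⟨hgood, hcard⟩ := mem_Pv.mp hp
    rw [Finset.mem_filter]
    exact ⟨Finset.mem_univ _, graphOf_isTree hgood, by rw [degree_zero hgood, hcard]⟩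
  · intro p hp q hq heq
    exact graphOf_injective (mem_Pv.mp hp).1 (mem_Pv.mp hq).1 heq
  · intro G hg
    obtain ⟨-, htree, hdeg⟩ := Finset.mem_filter.mp hg
    have hdeg := hdeg
    refine ⟨parent htree, ?_, graphOf_parent htree⟩
    rw [mem_Pv]
    refine ⟨parent_good htree, ?_⟩
    rw [← degree_zero (parent_good htree), graphOf_parent htree]
    exact hdeg

end TreeCountAux

/-- **Trees in which a fixed vertex has a given degree.** For `m ≥ 2` and
`1 ≤ v ≤ m - 1`, the number of trees on `Fin m` in which the vertex `0`
(playing the role of vertex `1` in `{1, …, m}`) has degree exactly `v` equals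
`binomial (m-2) (v-1) * (m-1) ^ (m-1-v)`. -/
theorem card_trees_with_fixed_vertex_degree (m : ℕ) (hm : 2 ≤ m) (v : ℕ)
    (hv1 : 1 ≤ v) (hv2 : v ≤ m - 1) :
    (Finset.univ.filter
        (fun G : SimpleGraph (Fin m) =>
          G.IsTree ∧ G.degree (⟨0, by omega⟩ : Fin m) = v)).card
      = Nat.choose (m - 2) (v - 1) * (m - 1) ^ (m - 1 - v) := by
  obtain ⟨n, rfl⟩ : ∃ n, m = n + 2 := ⟨m - 2, by omega⟩
  have h1 : n + 2 - 2 = n := by omega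
  have h2 : n + 2 - 1 = n + 1 := by omega
  rw [h1, h2]
  have hzero : (⟨0, by omega⟩ : Fin (n+2)) = 0 := rfl
  rw [hzero]
  exact TreeCountAux.main_count hv1 (by omega)
end

section
/- For all reals s_1 > 0 and s_2 > 0, the double integral over p > 0, q > 0 of e^{-p s_1 - q s_2} / (p + q)^{3/2} dp dq, multiplied by 1/√(2π), equals √2 / (√s_1 + √s_2). -/
open MeasureTheory Real Set Filter

lemma inv_add_sq_eq {c : ℝ} (hc : 0 < c) (x : ℝ) :
    (c + x ^ 2)⁻¹ = c⁻¹ * (1 + ((Real.sqrt c)⁻¹ * x) ^ 2)⁻¹ := by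
  have hcs : Real.sqrt c ^ 2 = c := Real.sq_sqrt hc.le
  rw [mul_pow, inv_pow, hcs]
  rw [eq_comm, mul_inv_eq_iff_eq_mul₀ (by positivity)]
  field_simp

lemma integrable_inv_add_sq {c : ℝ} (hc : 0 < c) :
    Integrable (fun x : ℝ => (c + x ^ 2)⁻¹) := by
  simp_rw [inv_add_sq_eq hc]
  exact (integrable_inv_one_add_sq.comp_mul_left'
    (inv_ne_zero (Real.sqrt_pos.mpr hc).ne')).const_mul _

lemma lemA {c : ℝ} (hc : 0 < c) :
    ∫ x in Ioi (0:ℝ), (c + x ^ 2)⁻¹ = π / (2 * Real.sqrt c) := by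
  have hsc : (0:ℝ) < Real.sqrt c := Real.sqrt_pos.mpr hc
  have hcs : Real.sqrt c * Real.sqrt c = c := Real.mul_self_sqrt hc.le
  simp_rw [inv_add_sq_eq hc]
  rw [MeasureTheory.integral_const_mul,
    integral_comp_mul_left_Ioi (fun y => (1 + y ^ 2)⁻¹) 0 (inv_pos.mpr hsc), mul_zero,
    integral_Ioi_inv_one_add_sq, arctan_zero, sub_zero, smul_eq_mul, inv_inv]
  rw [eq_div_iff (by positivity)]
  field_simp
  linear_combination hcs


section
variable {a b : ℝ}

lemma tendsto_div_add_sq (ha : 0 < a) :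
    Tendsto (fun x : ℝ => x / (a + x ^ 2)) atTop (nhds 0) := by
  apply tendsto_of_tendsto_of_tendsto_of_le_of_le' tendsto_const_nhds tendsto_inv_atTop_zero
  · filter_upwards [eventually_gt_atTop (0:ℝ)] with x hx
    positivity
  · filter_upwards [eventually_gt_atTop (0:ℝ)] with x hx
    rw [div_le_iff₀ (by positivity), inv_mul_eq_div, le_div_iff₀ hx]
    nlinarith

lemma lemB_eq (ha : 0 < a) :
    ∫ x in Ioi (0:ℝ), 2 * x ^ 2 / ((a + x ^ 2) * (a + x ^ 2))
      = π / (2 * Real.sqrt a) := by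
  have hderiv : ∀ x ∈ Ici (0:ℝ), HasDerivAt (fun x : ℝ => x / (a + x ^ 2))
      ((a - x ^ 2) / (a + x ^ 2) ^ 2) x := by
    intro x _
    have h1 : HasDerivAt (fun x : ℝ => x) 1 x := hasDerivAt_id x
    have h2 : HasDerivAt (fun x : ℝ => a + x ^ 2) (2 * x) x := by
      simpa using (hasDerivAt_pow 2 x).const_add a
    have := h1.div h2 (by positivity)
    exact this.congr_deriv (by ring)
  have hint : IntegrableOn (fun x : ℝ => (a - x ^ 2) / (a + x ^ 2) ^ 2) (Ioi 0) := by
    apply Integrable.mono' ((integrable_inv_add_sq ha).restrict (s := Ioi 0))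
    · apply Measurable.aestronglyMeasurable
      apply Measurable.div (by fun_prop) (by fun_prop)
    · filter_upwards with x
      have h : (0:ℝ) < a + x ^ 2 := by positivity
      rw [norm_div, norm_pow, Real.norm_eq_abs (a + x ^ 2), abs_of_pos h, Real.norm_eq_abs,
        div_le_iff₀ (by positivity)]
      have h1 : |a - x ^ 2| ≤ a + x ^ 2 := abs_le.mpr ⟨by nlinarith, by nlinarith⟩
      calc |a - x ^ 2| ≤ a + x ^ 2 := h1
        _ = (a + x ^ 2)⁻¹ * (a + x ^ 2) ^ 2 := by field_simp [sq]
  have key := integral_Ioi_of_hasDerivAt_of_tendsto' hderiv hint (tendsto_div_add_sq ha)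
  simp only [zero_div, sub_zero, zero_pow] at key
  have hptw : ∀ x : ℝ, 2 * x ^ 2 / ((a + x ^ 2) * (a + x ^ 2))
      = (a + x ^ 2)⁻¹ - (a - x ^ 2) / (a + x ^ 2) ^ 2 := by
    intro x
    have h : (0:ℝ) < a + x ^ 2 := by positivity
    field_simp
    ring
  simp_rw [hptw]
  rw [integral_sub ((integrable_inv_add_sq ha).restrict) hint, key, lemA ha]
  simp
end

section
variable {a b : ℝ}

lemma lemBx (ha : 0 < a) (hb : 0 < b) :
    ∫ x in Ioi (0:ℝ), 2 * x ^ 2 / ((a + x ^ 2) * (b + x ^ 2))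
      = π / (Real.sqrt a + Real.sqrt b) := by
  rcases eq_or_ne a b with rfl | hab
  · rw [lemB_eq ha, ← two_mul]
  · have hba : b - a ≠ 0 := sub_ne_zero.mpr (Ne.symm hab)
    have hptw : ∀ x : ℝ, 2 * x ^ 2 / ((a + x ^ 2) * (b + x ^ 2))
        = (2 * b / (b - a)) * (b + x ^ 2)⁻¹ - (2 * a / (b - a)) * (a + x ^ 2)⁻¹ := by
      intro x
      have h1 : (0:ℝ) < a + x ^ 2 := by positivity
      have h2 : (0:ℝ) < b + x ^ 2 := by positivity
      field_simp
      ring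
    simp_rw [hptw]
    rw [integral_sub (((integrable_inv_add_sq hb).restrict).const_mul _)
      (((integrable_inv_add_sq ha).restrict).const_mul _),
      integral_const_mul, integral_const_mul, lemA ha, lemA hb]
    have hsa : (0:ℝ) < Real.sqrt a := Real.sqrt_pos.mpr ha
    have hsb : (0:ℝ) < Real.sqrt b := Real.sqrt_pos.mpr hb
    have ea : Real.sqrt a ^ 2 = a := Real.sq_sqrt ha.le
    have eb : Real.sqrt b ^ 2 = b := Real.sq_sqrt hb.le
    have hne : Real.sqrt b ^ 2 - Real.sqrt a ^ 2 ≠ 0 := by rw [ea, eb]; exact hba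
    field_simp
    linear_combination b * ea - a * eb
end
section
variable {a b : ℝ}

lemma lemB (ha : 0 < a) (hb : 0 < b) :
    ∫ t in Ioi (0:ℝ), Real.sqrt t / ((a + t) * (b + t))
      = π / (Real.sqrt a + Real.sqrt b) := by
  rw [← integral_comp_rpow_Ioi_of_pos
    (g := fun t => Real.sqrt t / ((a + t) * (b + t))) (p := 2) two_pos, ← lemBx ha hb]
  apply setIntegral_congr_fun measurableSet_Ioi
  intro x hx
  have h2 : x ^ (2:ℝ) = x ^ 2 := by
    rw [show (2:ℝ) = ((2:ℕ):ℝ) by norm_num, Real.rpow_natCast]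
  simp only [smul_eq_mul]
  rw [show (2:ℝ) - 1 = 1 by norm_num, Real.rpow_one, h2, Real.sqrt_sq (le_of_lt hx)]
  have h1 : (0:ℝ) < a + x ^ 2 := by positivity
  have h3 : (0:ℝ) < b + x ^ 2 := by positivity
  field_simp

lemma lemB_int (ha : 0 < a) (hb : 0 < b) :
    IntegrableOn (fun t : ℝ => Real.sqrt t / ((a + t) * (b + t))) (Ioi 0) := by
  have hmeas : Measurable (fun t : ℝ => Real.sqrt t / ((a + t) * (b + t))) := by
    fun_prop
  rw [← Ioc_union_Ioi_eq_Ioi (zero_le_one (α := ℝ))]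
  apply IntegrableOn.union
  · have hconst : IntegrableOn (fun _ : ℝ => (a * b)⁻¹) (Ioc (0:ℝ) 1) :=
      integrableOn_const measure_Ioc_lt_top.ne
    apply Integrable.mono' hconst
    · exact hmeas.aestronglyMeasurable
    · rw [ae_restrict_iff' measurableSet_Ioc]
      filter_upwards with t ht
      have h0 : (0:ℝ) < t := ht.1
      have hd : a * b ≤ (a + t) * (b + t) := by nlinarith
      rw [Real.norm_eq_abs, abs_of_nonneg (by positivity)]
      rw [div_le_iff₀ (by nlinarith), inv_mul_eq_div, le_div_iff₀ (by positivity)]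
      have hs : Real.sqrt t ≤ 1 := by
        rw [show (1:ℝ) = Real.sqrt 1 by simp]
        exact Real.sqrt_le_sqrt ht.2
      nlinarith [mul_nonneg (sub_nonneg.mpr hs) (mul_pos ha hb).le]
  · apply Integrable.mono' (integrableOn_Ioi_rpow_of_lt (by norm_num : (-3/2 : ℝ) < -1)
      one_pos)
    · exact hmeas.aestronglyMeasurable
    · rw [ae_restrict_iff' measurableSet_Ioi]
      filter_upwards with t ht
      have h0 : (0:ℝ) < t := lt_trans one_pos ht
      rw [Real.norm_eq_abs, abs_of_nonneg (by positivity)]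
      have h2 : t * t = t ^ (2:ℝ) := by
        rw [show (2:ℝ) = ((2:ℕ):ℝ) by norm_num, Real.rpow_natCast, sq]
      have key : t ^ (-3/2 : ℝ) = Real.sqrt t / (t * t) := by
        rw [Real.sqrt_eq_rpow, h2, ← Real.rpow_sub h0]
        norm_num
      rw [key]
      apply div_le_div_of_nonneg_left (Real.sqrt_nonneg t) (by positivity)
      nlinarith
end

section
open ENNReal

lemma gamma32 : Real.Gamma (3/2) = Real.sqrt π / 2 := by
  have h : (3/2 : ℝ) = 1/2 + 1 := by norm_num
  rw [h, Real.Gamma_add_one (by norm_num), Real.Gamma_one_half_eq]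
  ring

lemma expLint {c : ℝ} (hc : 0 < c) :
    ∫⁻ x in Ioi (0:ℝ), ENNReal.ofReal (Real.exp (-(c * x)))
      = ENNReal.ofReal (1 / c) := by
  rw [← ofReal_integral_eq_lintegral_ofReal]
  · congr 1
    have := integral_rpow_mul_exp_neg_mul_Ioi one_pos hc
    simp only [sub_self, Real.rpow_zero, one_mul, Real.rpow_one, Real.Gamma_one,
      mul_one] at this
    rw [← this]
  · have := exp_neg_integrableOn_Ioi 0 hc
    simp only [neg_mul] at this
    exact this
  · filter_upwards with x using (Real.exp_pos _).le

lemma sqrtExpLint {c : ℝ} (hc : 0 < c) :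
    ∫⁻ t in Ioi (0:ℝ), ENNReal.ofReal (Real.sqrt t * Real.exp (-(c * t)))
      = ENNReal.ofReal (Real.Gamma (3/2) * (1 / c) ^ ((3:ℝ)/2)) := by
  rw [← ofReal_integral_eq_lintegral_ofReal]
  · congr 1
    have := integral_rpow_mul_exp_neg_mul_Ioi (by norm_num : (0:ℝ) < 3/2) hc
    have heq : ∫ x in Ioi (0:ℝ), Real.sqrt x * Real.exp (-(c*x))
        = ∫ t in Ioi (0:ℝ), t ^ ((3:ℝ)/2 - 1) * Real.exp (-(c*t)) := by
      apply setIntegral_congr_fun measurableSet_Ioi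
      intro t ht
      simp only []
      rw [show (3/2:ℝ) - 1 = 1/2 by norm_num, Real.sqrt_eq_rpow]
    rw [heq, this, mul_comm]
  · have h := integrableOn_rpow_mul_exp_neg_mul_rpow
      (by norm_num : (-1:ℝ) < 1/2) one_pos hc
    simp_rw [Real.rpow_one] at h
    apply h.congr_fun (fun t ht => ?_) measurableSet_Ioi
    rw [Real.sqrt_eq_rpow, neg_mul]
  · filter_upwards with t using by positivity

lemma rpow_rep {c : ℝ} (hc : 0 < c) :
    ENNReal.ofReal (1 / c ^ ((3:ℝ)/2))
      = ENNReal.ofReal (1 / Real.Gamma (3/2)) *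
        ∫⁻ t in Ioi (0:ℝ), ENNReal.ofReal (Real.sqrt t * Real.exp (-(c * t))) := by
  have hG : 0 < Real.Gamma (3/2) := Real.Gamma_pos_of_pos (by norm_num)
  rw [sqrtExpLint hc, ← ENNReal.ofReal_mul (by positivity)]
  congr 1
  rw [one_div c, Real.inv_rpow hc.le]
  field_simp

end

section
open ENNReal
variable {a b p : ℝ}

lemma innerLint (ha : 0 < a) (hb : 0 < b) (hp : 0 < p) :
    ∫⁻ q in Ioi (0:ℝ), ENNReal.ofReal (Real.exp (-p * a - q * b) / (p + q) ^ ((3:ℝ)/2))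
      = ENNReal.ofReal (1 / Real.Gamma (3/2)) * (ENNReal.ofReal (Real.exp (-p * a)) *
        ∫⁻ t in Ioi (0:ℝ), ENNReal.ofReal (Real.sqrt t * Real.exp (-(p * t)) / (b + t))) := by
  have hΓ : ENNReal.ofReal (1 / Real.Gamma (3/2)) ≠ ⊤ := ofReal_ne_top
  -- Step 1: rewrite the integrand using the Gamma representation
  have step1 : ∀ q ∈ Ioi (0:ℝ),
      ENNReal.ofReal (Real.exp (-p * a - q * b) / (p + q) ^ ((3:ℝ)/2))
        = ENNReal.ofReal (1 / Real.Gamma (3/2)) *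
          ∫⁻ t in Ioi (0:ℝ), ENNReal.ofReal
            (Real.exp (-p * a - q * b) * (Real.sqrt t * Real.exp (-((p + q) * t)))) := by
    intro q hq
    have hpq : 0 < p + q := by exact add_pos hp hq
    rw [div_eq_mul_one_div, ENNReal.ofReal_mul (Real.exp_nonneg _), rpow_rep hpq,
      ← mul_assoc, mul_comm (ENNReal.ofReal (Real.exp _)), mul_assoc,
      ← lintegral_const_mul' _ _ ofReal_ne_top]
    congr 1
    refine setLIntegral_congr_fun measurableSet_Ioi (fun t ht => ?_)
    rw [← ENNReal.ofReal_mul (Real.exp_nonneg _)]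
  rw [setLIntegral_congr_fun measurableSet_Ioi step1,
    lintegral_const_mul' _ _ hΓ]
  congr 1
  -- Step 2: swap the order of integration
  rw [lintegral_lintegral_swap]
  · -- Step 3: compute the inner q-integral for fixed t
    have step3 : ∀ t ∈ Ioi (0:ℝ),
        (∫⁻ q in Ioi (0:ℝ), ENNReal.ofReal
            (Real.exp (-p * a - q * b) * (Real.sqrt t * Real.exp (-((p + q) * t)))))
          = ENNReal.ofReal (Real.exp (-p * a)) *
            ENNReal.ofReal (Real.sqrt t * Real.exp (-(p * t)) / (b + t)) := by
      intro t ht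
      have hbt : 0 < b + t := by exact add_pos hb ht
      have hptw : ∀ q : ℝ, Real.exp (-p * a - q * b) * (Real.sqrt t * Real.exp (-((p + q) * t)))
          = (Real.exp (-p * a) * (Real.sqrt t * Real.exp (-(p * t)))) *
            Real.exp (-((b + t) * q)) := by
        intro q
        have e1 : Real.exp (-p * a - q * b) * (Real.sqrt t * Real.exp (-((p + q) * t)))
            = Real.sqrt t * Real.exp ((-p * a - q * b) + (-((p + q) * t))) := by
          rw [Real.exp_add]; ring
        have e2 : (Real.exp (-p * a) * (Real.sqrt t * Real.exp (-(p * t)))) *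
              Real.exp (-((b + t) * q))
            = Real.sqrt t * Real.exp ((-p * a + -(p * t)) + (-((b + t) * q))) := by
          rw [Real.exp_add, Real.exp_add]; ring
        rw [e1, e2, show (-p * a - q * b) + (-((p + q) * t))
          = (-p * a + -(p * t)) + (-((b + t) * q)) from by ring]
      have hof : ∀ q : ℝ, ENNReal.ofReal
            (Real.exp (-p * a - q * b) * (Real.sqrt t * Real.exp (-((p + q) * t))))
          = ENNReal.ofReal (Real.exp (-p * a) * (Real.sqrt t * Real.exp (-(p * t)))) *
            ENNReal.ofReal (Real.exp (-((b + t) * q))) := by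
        intro q
        rw [hptw q, ENNReal.ofReal_mul (by positivity)]
      rw [lintegral_congr hof, lintegral_const_mul' _ _ ofReal_ne_top, expLint hbt]
      rw [ENNReal.ofReal_mul (Real.exp_nonneg _), mul_assoc, ← ENNReal.ofReal_mul (by positivity),
        mul_one_div]
    rw [setLIntegral_congr_fun measurableSet_Ioi step3,
      lintegral_const_mul' _ _ ofReal_ne_top]
  · apply Measurable.aemeasurable
    apply Measurable.ennreal_ofReal
    fun_prop

end

section
open ENNReal
variable {a b : ℝ}

lemma outerLint (ha : 0 < a) (hb : 0 < b) :
    ∫⁻ p in Ioi (0:ℝ), (ENNReal.ofReal (Real.exp (-p * a)) *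
        ∫⁻ t in Ioi (0:ℝ), ENNReal.ofReal (Real.sqrt t * Real.exp (-(p * t)) / (b + t)))
      = ENNReal.ofReal (π / (Real.sqrt a + Real.sqrt b)) := by
  have step1 : ∀ p : ℝ,
      (ENNReal.ofReal (Real.exp (-p * a)) *
        ∫⁻ t in Ioi (0:ℝ), ENNReal.ofReal (Real.sqrt t * Real.exp (-(p * t)) / (b + t)))
      = ∫⁻ t in Ioi (0:ℝ), ENNReal.ofReal
          (Real.exp (-p * a) * (Real.sqrt t * Real.exp (-(p * t)) / (b + t))) := by
    intro p
    rw [← lintegral_const_mul' _ _ ofReal_ne_top]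
    exact lintegral_congr fun t => (ENNReal.ofReal_mul (Real.exp_nonneg _)).symm
  simp_rw [step1]
  rw [lintegral_lintegral_swap]
  · have step2 : ∀ t ∈ Ioi (0:ℝ),
        (∫⁻ p in Ioi (0:ℝ), ENNReal.ofReal
            (Real.exp (-p * a) * (Real.sqrt t * Real.exp (-(p * t)) / (b + t))))
          = ENNReal.ofReal (Real.sqrt t / ((a + t) * (b + t))) := by
      intro t ht
      have hbt : 0 < b + t := add_pos hb ht
      have hat : 0 < a + t := add_pos ha ht
      have hptw : ∀ p : ℝ, Real.exp (-p * a) * (Real.sqrt t * Real.exp (-(p * t)) / (b + t))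
          = (Real.sqrt t / (b + t)) * Real.exp (-((a + t) * p)) := by
        intro p
        rw [show -((a + t) * p) = (-p * a) + (-(p * t)) from by ring, Real.exp_add]
        ring
      have hof : ∀ p : ℝ, ENNReal.ofReal
            (Real.exp (-p * a) * (Real.sqrt t * Real.exp (-(p * t)) / (b + t)))
          = ENNReal.ofReal (Real.sqrt t / (b + t)) *
            ENNReal.ofReal (Real.exp (-((a + t) * p))) := by
        intro p
        rw [hptw p, ENNReal.ofReal_mul (by positivity)]
      rw [lintegral_congr hof, lintegral_const_mul' _ _ ofReal_ne_top, expLint hat,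
        ← ENNReal.ofReal_mul (by positivity)]
      congr 1
      rw [div_mul_div_comm, mul_one, mul_comm (b + t)]
    rw [setLIntegral_congr_fun measurableSet_Ioi step2,
      ← ofReal_integral_eq_lintegral_ofReal (lemB_int ha hb)
        (by filter_upwards [ae_restrict_mem measurableSet_Ioi] with t ht;
            have : (0:ℝ) < t := ht; positivity),
      lemB ha hb]
  · apply Measurable.aemeasurable
    apply Measurable.ennreal_ofReal
    fun_prop
end

section
open ENNReal

/-- **The edge factor in Kontsevich's formula.** For `s₁, s₂ > 0`,
`(1/√(2π)) ∬_{p,q>0} e^(-p s₁ - q s₂) / (p+q)^(3/2) dp dq = √2 / (√s₁ + √s₂)`. -/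
theorem edge_factor_double_integral (s₁ s₂ : ℝ) (hs₁ : 0 < s₁) (hs₂ : 0 < s₂) :
    (1 / Real.sqrt (2 * Real.pi)) *
      ∫ p in Set.Ioi (0 : ℝ), ∫ q in Set.Ioi (0 : ℝ),
        Real.exp (-p * s₁ - q * s₂) / (p + q) ^ ((3 : ℝ) / 2)
    = Real.sqrt 2 / (Real.sqrt s₁ + Real.sqrt s₂) := by
  set I : ℝ → ℝ≥0∞ := fun p => ∫⁻ q in Ioi (0:ℝ),
    ENNReal.ofReal (Real.exp (-p * s₁ - q * s₂) / (p + q) ^ ((3:ℝ)/2)) with hI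
  have hmeas2 : Measurable (fun z : ℝ × ℝ =>
      ENNReal.ofReal (Real.exp (-z.1 * s₁ - z.2 * s₂) / (z.1 + z.2) ^ ((3:ℝ)/2))) := by
    apply Measurable.ennreal_ofReal
    fun_prop
  have hImeas : Measurable I := hmeas2.lintegral_prod_right'
  have htot : ∫⁻ p in Ioi (0:ℝ), I p
      = ENNReal.ofReal ((1 / Real.Gamma (3/2)) * (π / (Real.sqrt s₁ + Real.sqrt s₂))) := by
    rw [setLIntegral_congr_fun measurableSet_Ioi
        (fun p hp => innerLint hs₁ hs₂ hp),
      lintegral_const_mul' _ _ ofReal_ne_top, outerLint hs₁ hs₂,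
      ← ENNReal.ofReal_mul (by positivity)]
  have hae : ∀ᵐ p ∂(volume.restrict (Ioi (0:ℝ))), I p < ⊤ :=
    ae_lt_top hImeas (by rw [htot]; exact ofReal_ne_top)
  have hconv : ∫ p in Ioi (0:ℝ), (∫ q in Ioi (0:ℝ),
      Real.exp (-p * s₁ - q * s₂) / (p + q) ^ ((3:ℝ)/2))
      = (1 / Real.Gamma (3/2)) * (π / (Real.sqrt s₁ + Real.sqrt s₂)) := by
    have step1 : ∀ p ∈ Ioi (0:ℝ), (∫ q in Ioi (0:ℝ),
        Real.exp (-p * s₁ - q * s₂) / (p + q) ^ ((3:ℝ)/2)) = (I p).toReal := by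
      intro p hp
      apply integral_eq_lintegral_of_nonneg_ae
      · filter_upwards [ae_restrict_mem measurableSet_Ioi] with q hq
        have hpq : (0:ℝ) < p + q := add_pos hp hq
        positivity
      · apply Measurable.aestronglyMeasurable
        fun_prop
    rw [setIntegral_congr_fun measurableSet_Ioi step1]
    rw [integral_eq_lintegral_of_nonneg_ae
        (ae_of_all _ fun p => ENNReal.toReal_nonneg)
        hImeas.ennreal_toReal.aestronglyMeasurable]
    rw [lintegral_congr_ae (by filter_upwards [hae] with p hp using ofReal_toReal hp.ne),
      htot, toReal_ofReal (by positivity)]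
  rw [hconv, gamma32]
  have h2 : Real.sqrt 2 * Real.sqrt 2 = 2 := Real.mul_self_sqrt (by norm_num)
  have hπ : Real.sqrt π * Real.sqrt π = π := Real.mul_self_sqrt Real.pi_pos.le
  have hs : (0:ℝ) < Real.sqrt s₁ + Real.sqrt s₂ := by
    have := Real.sqrt_pos.mpr hs₁
    have := Real.sqrt_pos.mpr hs₂
    linarith
  rw [Real.sqrt_mul (by norm_num : (0:ℝ) ≤ 2) π]
  have h2p : (0:ℝ) < Real.sqrt 2 := Real.sqrt_pos.mpr (by norm_num)
  have hπp : (0:ℝ) < Real.sqrt π := Real.sqrt_pos.mpr Real.pi_pos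
  field_simp
  linear_combination (-(Real.sqrt π * Real.sqrt π)) * h2 + (-2) * hπ

end
end
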